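/- arXiv:math/0610153 — 8 statements merged into one kernel-verified Lean document; each statement's English description precedes it below -/
import Mathlib

section
/- Let u be a semiclassical moment functional on real polynomials in d variables, with data Φ symmetric d×d of degree p, Ψ of size d×1 with degree q ≥ 1, s = max{p−2, q−1}, and let {ℙ_n}_{n≥0} be a WOPS with respect to u. Then for every n ≥ s+1 there exist polynomial matrices M_1^n of size (d·r_{n+1})×r_n with deg M_1^n ≤ s and M_2^n of size (d·r_n)×r_n with deg M_2^n ≤ s+1 such that Φ ∇ℙ_n^t = (I_d ⊗ ℙ_{n+1}^t) M_1^n + (I_d ⊗ ℙ_n^t) M_2^n. -/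
open MvPolynomial Matrix Finset MeasureTheory

noncomputable section

/-- Real polynomials in `d` variables. -/
abbrev MPoly (d : ℕ) := MvPolynomial (Fin d) ℝ

/-- A moment functional: a linear functional on `MPoly d`. -/
abbrev MomF (d : ℕ) := MPoly d →ₗ[ℝ] ℝ

/-- `r_n = binom(n + d - 1, n)`, the dimension of the space of homogeneous
polynomials of degree `n` in `d` variables. -/
def rdim (d n : ℕ) : ℕ := (n + d - 1).choose n

/-- Entrywise application of a moment functional to a polynomial matrix. -/
def mApply {d : ℕ} (u : MomF d) {m n : Type*} (M : Matrix m n (MPoly d)) : Matrix m n ℝ :=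
  Matrix.of fun i j => u (M i j)

/-- The matrix Pearson equation `div(Φ u) = Ψᵗ u`, i.e. `⟨u, Φ ∇f + Ψ f⟩ = 0`
for every polynomial `f` (a system of `d` scalar equations). -/
def Pearson {d : ℕ} (u : MomF d) (Φ : Matrix (Fin d) (Fin d) (MPoly d))
    (Ψ : Fin d → MPoly d) : Prop :=
  ∀ f : MPoly d, ∀ i : Fin d, u (∑ j, Φ i j * pderiv j f + Ψ i * f) = 0

/-- Degree of a polynomial matrix: max of total degrees of the entries. -/
def matDeg {d : ℕ} {m n : Type*} [Fintype m] [Fintype n]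
    (M : Matrix m n (MPoly d)) : ℕ :=
  Finset.univ.sup fun p : m × n => (M p.1 p.2).totalDegree

/-- Degree of a polynomial (column) vector. -/
def vecDeg {d : ℕ} {m : Type*} [Fintype m] (v : m → MPoly d) : ℕ :=
  Finset.univ.sup fun i => (v i).totalDegree

/-- The Jacobian `∇ℙᵗ`: the `d × m` matrix with `(i,k)` entry `∂ᵢ P k`. -/
def gradT {d m : ℕ} (P : Fin m → MPoly d) : Matrix (Fin d) (Fin m) (MPoly d) :=
  Matrix.of fun i k => pderiv i (P k)

/-- The Kronecker product `I_d ⊗ ℙᵗ`: the block-diagonal `d × (d·m)` matrix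
whose `d` diagonal blocks equal the row vector `ℙᵗ`. -/
def kronIdRow {d m : ℕ} (P : Fin m → MPoly d) :
    Matrix (Fin d) (Fin d × Fin m) (MPoly d) :=
  Matrix.of fun i jk => if i = jk.1 then P jk.2 else 0

/-- A constant real matrix viewed as a polynomial matrix. -/
def cmap {d : ℕ} {m n : Type*} (F : Matrix m n ℝ) : Matrix m n (MPoly d) :=
  F.map MvPolynomial.C

/-- `{ℙ_n}` is a weak orthogonal polynomial system with respect to `u`:
each entry of `ℙ_n` has total degree `n`, the entries of `ℙ_0, …, ℙ_n` form a
basis of the polynomials of total degree at most `n` (spanning + linear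
independence), `⟨u, ℙ_n ℙ_mᵗ⟩ = 0` for `n ≠ m`, and `H_n = ⟨u, ℙ_n ℙ_nᵗ⟩` is
nonsingular. -/
structure IsWOPS {d : ℕ} (u : MomF d) (P : (n : ℕ) → Fin (rdim d n) → MPoly d) : Prop where
  deg : ∀ n k, (P n k).totalDegree = n
  span : ∀ n : ℕ, MvPolynomial.restrictTotalDegree (Fin d) ℝ n ≤
    Submodule.span ℝ {g | ∃ m ≤ n, ∃ k, P m k = g}
  indep : LinearIndependent ℝ (fun p : (n : ℕ) × Fin (rdim d n) => P p.1 p.2)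
  orth : ∀ m n, m ≠ n → ∀ j k, u (P m j * P n k) = 0
  Hdet : ∀ n, (Matrix.of fun j k : Fin (rdim d n) => u (P n j * P n k)).det ≠ 0

/-- The matrix `H_n = ⟨u, ℙ_n ℙ_nᵗ⟩`. -/
def Hmat {d : ℕ} (u : MomF d) (P : (n : ℕ) → Fin (rdim d n) → MPoly d) (n : ℕ) :
    Matrix (Fin (rdim d n)) (Fin (rdim d n)) ℝ :=
  Matrix.of fun j k => u (P n j * P n k)

/-- The second-order differential operator
`L[f] = Σ_{i,j} φ_ij ∂²f/∂xᵢ∂xⱼ + Σ_i ψ_i ∂f/∂xᵢ` associated with `Φ`, `Ψ`. -/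
def Lop {d : ℕ} (Φ : Matrix (Fin d) (Fin d) (MPoly d)) (Ψ : Fin d → MPoly d)
    (f : MPoly d) : MPoly d :=
  (∑ i, ∑ j, Φ i j * pderiv i (pderiv j f)) + ∑ i, Ψ i * pderiv i f


lemma totalDegree_pderiv_le {d : ℕ} (i : Fin d) (f : MvPolynomial (Fin d) ℝ) :
    (pderiv i f).totalDegree ≤ f.totalDegree - 1 := by
  classical
  have hrw : pderiv i f = ∑ s ∈ f.support, pderiv i (monomial s (coeff s f)) := by
    rw [← map_sum]; conv_lhs => rw [f.as_sum]
  rw [hrw]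
  refine totalDegree_finsetSum_le (fun s hs => ?_)
  rw [pderiv_monomial]
  by_cases h : s i = 0
  · simp [h]
  · refine (totalDegree_monomial_le _ _).trans ?_
    show (s - Finsupp.single i 1).sum (fun _ n => n) ≤ f.totalDegree - 1
    have hle : Finsupp.single i 1 ≤ s := by
      rw [Finsupp.single_le_iff]; omega
    have hdec : (s - Finsupp.single i 1) + Finsupp.single i 1 = s :=
      tsub_add_cancel_of_le hle
    have hsum : (s - Finsupp.single i 1).sum (fun _ n => n) + 1 = s.sum (fun _ n => n) := by
      conv_rhs => rw [← hdec]
      rw [Finsupp.sum_add_index' (fun _ => rfl) (fun _ _ _ => rfl)]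
      simp
    have : s.sum (fun _ n => n) ≤ f.totalDegree := le_totalDegree hs
    omega

lemma sub_single_sum {d : ℕ} {i : Fin d} {α : Fin d →₀ ℕ} (h : Finsupp.single i 1 ≤ α) :
    (α - Finsupp.single i 1).sum (fun _ n => n) + 1 = α.sum (fun _ n => n) := by
  have hdec : (α - Finsupp.single i 1) + Finsupp.single i 1 = α := tsub_add_cancel_of_le h
  conv_rhs => rw [← hdec]
  rw [Finsupp.sum_add_index' (fun _ => rfl) (fun _ _ _ => rfl)]
  simp

lemma exists_decomp {d N : ℕ} [Nonempty (Fin d)] (f : MvPolynomial (Fin d) ℝ)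
    (hf : f.totalDegree ≤ N + 1) :
    ∃ (c : ℝ) (h : Fin d → MvPolynomial (Fin d) ℝ),
      (∀ i, (h i).totalDegree ≤ N) ∧ f = C c + ∑ i, X i * h i := by
  classical
  set pick : (Fin d →₀ ℕ) → Fin d := fun α =>
    if h : α = 0 then Classical.arbitrary _
    else (Finsupp.support_nonempty_iff.mpr h).choose with hpick
  have hpick_mem : ∀ α : Fin d →₀ ℕ, α ≠ 0 → Finsupp.single (pick α) 1 ≤ α := by
    intro α hα
    have := (Finsupp.support_nonempty_iff.mpr hα).choose_spec
    rw [Finsupp.mem_support_iff] at this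
    rw [Finsupp.single_le_iff, hpick]
    simp only [hα, dif_neg, not_false_iff]
    omega
  refine ⟨coeff 0 f, fun i => ∑ α ∈ (f.support.filter (· ≠ 0)).filter (fun α => pick α = i),
    monomial (α - Finsupp.single i 1) (coeff α f), fun i => ?_, ?_⟩
  · refine totalDegree_finsetSum_le (fun α hα => ?_)
    simp only [mem_filter, ne_eq] at hα
    refine (totalDegree_monomial_le _ _).trans ?_
    show (α - Finsupp.single i 1).sum (fun _ n => n) ≤ N
    have h1 : Finsupp.single i 1 ≤ α := hα.2 ▸ hpick_mem α hα.1.2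
    have h2 := sub_single_sum h1
    have h3 : α.sum (fun _ n => n) ≤ N + 1 := (le_totalDegree hα.1.1).trans hf
    omega
  · have key : ∀ i, X i * (∑ α ∈ (f.support.filter (· ≠ 0)).filter (fun α => pick α = i),
        monomial (α - Finsupp.single i 1) (coeff α f))
        = ∑ α ∈ (f.support.filter (· ≠ 0)).filter (fun α => pick α = i),
        monomial α (coeff α f) := by
      intro i
      rw [Finset.mul_sum]
      refine Finset.sum_congr rfl (fun α hα => ?_)
      simp only [mem_filter, ne_eq] at hα
      have h1 : Finsupp.single i 1 ≤ α := hα.2 ▸ hpick_mem α hα.1.2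
      rw [X, monomial_mul, one_mul, add_comm, tsub_add_cancel_of_le h1]
    rw [Finset.sum_congr rfl (fun i _ => key i)]
    rw [Finset.sum_fiberwise (f.support.filter (· ≠ 0)) pick (fun α => monomial α (coeff α f))]
    have hsplit := Finset.sum_filter_add_sum_filter_not f.support (· = 0)
      (fun α => monomial α (coeff α f))
    have h0 : ∑ α ∈ f.support.filter (· = 0), monomial α (coeff α f) = C (coeff 0 f) := by
      by_cases h : (0 : Fin d →₀ ℕ) ∈ f.support
      · rw [Finset.filter_eq', if_pos h, Finset.sum_singleton, C_apply]
      · rw [Finset.filter_eq', if_neg h, Finset.sum_empty]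
        rw [MvPolynomial.notMem_support_iff] at h
        rw [h, map_zero]
    rw [h0] at hsplit
    rw [← f.as_sum] at hsplit
    simp only [ne_eq]
    rw [hsplit]

namespace SSR

variable {d : ℕ} {u : MomF d} {P : (n : ℕ) → Fin (rdim d n) → MPoly d}

/-- The full family of polynomials. -/
def famP (P : (n : ℕ) → Fin (rdim d n) → MPoly d) : (Σ n : ℕ, Fin (rdim d n)) → MPoly d :=
  fun p => P p.1 p.2

lemma span_top (hW : IsWOPS u P) : ⊤ ≤ Submodule.span ℝ (Set.range (famP P)) := by
  intro f _
  have h1 : f ∈ restrictTotalDegree (Fin d) ℝ f.totalDegree :=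
    (mem_restrictTotalDegree _ _ _).mpr le_rfl
  have h2 := hW.span f.totalDegree h1
  refine Submodule.span_mono ?_ h2
  rintro g ⟨m, _, k, rfl⟩
  exact ⟨⟨m, k⟩, rfl⟩

/-- The basis given by the WOPS. -/
def wB (hW : IsWOPS u P) : Module.Basis (Σ n : ℕ, Fin (rdim d n)) ℝ (MPoly d) :=
  Module.Basis.mk hW.indep (span_top hW)

lemma wB_apply (hW : IsWOPS u P) (p : Σ n : ℕ, Fin (rdim d n)) : wB hW p = P p.1 p.2 :=
  Module.Basis.mk_apply _ _ _

/-- Membership in the span of levels in `S`. -/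
lemma mem_span_deg_le (hW : IsWOPS u P) {f : MPoly d} {N : ℕ} (hf : f.totalDegree ≤ N) :
    f ∈ Submodule.span ℝ (famP P '' {p | p.1 ≤ N}) := by
  have h2 := hW.span N ((mem_restrictTotalDegree _ _ _).mpr hf)
  refine Submodule.span_mono ?_ h2
  rintro g ⟨m, hm, k, rfl⟩
  exact ⟨⟨m, k⟩, hm, rfl⟩

lemma deg_le_of_mem_span (hW : IsWOPS u P) {f : MPoly d} {S : Set (Σ n : ℕ, Fin (rdim d n))}
    {N : ℕ} (hS : ∀ p ∈ S, p.1 ≤ N) (hf : f ∈ Submodule.span ℝ (famP P '' S)) :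
    f.totalDegree ≤ N := by
  rw [← mem_restrictTotalDegree _ _ f]
  refine Submodule.span_le.mpr ?_ hf
  rintro g ⟨p, hp, rfl⟩
  exact (mem_restrictTotalDegree _ _ _).mpr (by rw [famP, hW.deg]; exact hS p hp)

/-- `u (f * P m j) = 0` when `f` is in the span of the other levels. -/
lemma orth_of_mem_span (hW : IsWOPS u P) {f : MPoly d} {m : ℕ}
    (hf : f ∈ Submodule.span ℝ (famP P '' {p | p.1 ≠ m})) (j : Fin (rdim d m)) :
    u (f * P m j) = 0 := by
  have : Submodule.span ℝ (famP P '' {p | p.1 ≠ m}) ≤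
      LinearMap.ker (u ∘ₗ LinearMap.mulRight ℝ (P m j)) := by
    rw [Submodule.span_le]
    rintro g ⟨p, hp, rfl⟩
    simp only [SetLike.mem_coe, LinearMap.mem_ker, LinearMap.comp_apply,
      LinearMap.mulRight_apply]
    exact hW.orth p.1 m hp p.2 j
  exact this hf

/-- Orthogonality: `u (f * P m j) = 0` for `f` of low degree. -/
lemma orth_lowdeg (hW : IsWOPS u P) {f : MPoly d} {m : ℕ} (hf : f.totalDegree < m)
    (j : Fin (rdim d m)) : u (f * P m j) = 0 := by
  refine orth_of_mem_span hW (Submodule.span_mono ?_ (mem_span_deg_le hW le_rfl)) j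
  exact Set.image_mono (fun p hp => by
    simp only [Set.mem_setOf_eq] at hp ⊢; omega)

/-- The expansion formula for `u (f * P m j)` in terms of level-`m` coefficients. -/
lemma u_mul_eq_sum (hW : IsWOPS u P) (f : MPoly d) (m : ℕ) (j : Fin (rdim d m)) :
    u (f * P m j) = ∑ k, (wB hW).repr f ⟨m, k⟩ * u (P m k * P m j) := by
  classical
  set B := wB hW
  set c : Fin (rdim d m) → ℝ := fun k => B.repr f ⟨m, k⟩ with hc
  set f' : MPoly d := f - ∑ k, c k • B ⟨m, k⟩ with hf'
  have hrepr : ∀ p : Σ n : ℕ, Fin (rdim d n), p.1 ≠ m → B.repr f' p = B.repr f p := by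
    intro p hp
    simp only [hf', map_sub, map_sum, _root_.map_smul, Finsupp.coe_sub, Finsupp.coe_finset_sum,
      Pi.sub_apply, Finset.sum_apply, Finsupp.coe_smul, Pi.smul_apply,
      B.repr_self, smul_eq_mul]
    have : ∀ k : Fin (rdim d m), (Finsupp.single (⟨m, k⟩ : Σ n : ℕ, Fin (rdim d n)) (1:ℝ)) p = 0 := by
      intro k
      rw [Finsupp.single_apply_eq_zero]
      intro h; exact absurd (congrArg Sigma.fst h) hp
    rw [Finset.sum_eq_zero (fun x _ => by rw [this x, mul_zero]), sub_zero]
  have hreprm : ∀ k : Fin (rdim d m), B.repr f' ⟨m, k⟩ = 0 := by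
    intro k
    simp only [hf', map_sub, map_sum, _root_.map_smul, Finsupp.coe_sub, Finsupp.coe_finset_sum,
      Pi.sub_apply, Finset.sum_apply, Finsupp.coe_smul, Pi.smul_apply,
      B.repr_self, smul_eq_mul]
    rw [Finset.sum_eq_single k]
    · simp [hc]
    · intro b _ hb
      rw [Finsupp.single_apply_eq_zero.mpr, mul_zero]
      intro h
      exact absurd (eq_of_heq (Sigma.mk.inj_iff.mp h).2).symm hb
    · simp
  have hf'mem : f' ∈ Submodule.span ℝ (famP P '' {p | p.1 ≠ m}) := by
    rw [show famP P '' {p | p.1 ≠ m} = ⇑B '' {p | p.1 ≠ m} by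
      refine Set.image_congr (fun p _ => ?_); rw [wB_apply]; rfl]
    rw [B.mem_span_image]
    intro p hp
    simp only [Set.mem_setOf_eq]
    intro hpm
    simp only [Finset.mem_coe, Finsupp.mem_support_iff] at hp
    obtain ⟨a, b⟩ := p
    dsimp at hpm
    subst hpm
    exact hp (hreprm b)
  have h0 : u (f' * P m j) = 0 := orth_of_mem_span hW hf'mem j
  have hfeq : f = f' + ∑ k, c k • B ⟨m, k⟩ := by rw [hf']; ring
  calc u (f * P m j) = u (f' * P m j) + ∑ k, c k * u (B ⟨m, k⟩ * P m j) := by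
        rw [hfeq]
        rw [add_mul, map_add, Finset.sum_mul, map_sum]
        congr 1
        refine Finset.sum_congr rfl (fun k _ => ?_)
        rw [smul_mul_assoc, u.map_smul, smul_eq_mul]
    _ = ∑ k, c k * u (P m k * P m j) := by
        rw [h0, zero_add]
        refine Finset.sum_congr rfl (fun k _ => ?_)
        rw [wB_apply]

/-- Kill one level in the span, given orthogonality against that level. -/
lemma kill_level (hW : IsWOPS u P) {f : MPoly d} {S : Set (Σ n : ℕ, Fin (rdim d n))} {m : ℕ}
    (hf : f ∈ Submodule.span ℝ (famP P '' S))
    (horth : ∀ j, u (f * P m j) = 0) :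
    f ∈ Submodule.span ℝ (famP P '' {p | p ∈ S ∧ p.1 ≠ m}) := by
  classical
  set B := wB hW
  set c : Fin (rdim d m) → ℝ := fun k => B.repr f ⟨m, k⟩ with hc
  have hvec : c ᵥ* (Hmat u P m) = 0 := by
    funext j
    rw [Matrix.vecMul, Pi.zero_apply]
    rw [← horth j, u_mul_eq_sum hW f m j]
    rfl
  have hdet : IsUnit (Hmat u P m).det := isUnit_iff_ne_zero.mpr (hW.Hdet m)
  have hc0 : c = 0 := by
    have h1 := congrArg (· ᵥ* (Hmat u P m)⁻¹) hvec
    simpa [Matrix.vecMul_vecMul, Matrix.mul_nonsing_inv _ hdet, Matrix.vecMul_one] using h1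
  have hspan : famP P '' S = ⇑B '' S := by
    refine Set.image_congr (fun p _ => ?_); rw [wB_apply]; rfl
  rw [hspan] at hf
  rw [show famP P '' {p | p ∈ S ∧ p.1 ≠ m} = ⇑B '' {p | p ∈ S ∧ p.1 ≠ m} by
    refine Set.image_congr (fun p _ => ?_); rw [wB_apply]; rfl]
  rw [B.mem_span_image] at hf ⊢
  intro p hp
  refine ⟨hf hp, ?_⟩
  intro hpm
  simp only [Finset.mem_coe, Finsupp.mem_support_iff] at hp
  obtain ⟨a, b⟩ := p
  dsimp at hpm
  subst hpm
  exact hp (congrFun hc0 b)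

/-- `famP` image equals basis image. -/
lemma famP_eq_B (hW : IsWOPS u P) (S : Set (Σ n : ℕ, Fin (rdim d n))) :
    famP P '' S = ⇑(wB hW) '' S :=
  Set.image_congr (fun p _ => by rw [wB_apply]; rfl)

/-- The coefficient-extraction map at level `e`. -/
def coefAt (hW : IsWOPS u P) (e : ℕ) : MPoly d →ₗ[ℝ] (Fin (rdim d e) → ℝ) where
  toFun := fun f k => (wB hW).repr f ⟨e, k⟩
  map_add' := fun f g => by funext k; simp
  map_smul' := fun c f => by funext k; simp

lemma repr_sum_level_self (hW : IsWOPS u P) (e : ℕ) (μ : Fin (rdim d e) → ℝ)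
    (k : Fin (rdim d e)) :
    (wB hW).repr (∑ j, μ j • P e j) ⟨e, k⟩ = μ k := by
  classical
  have : ∀ j : Fin (rdim d e), μ j • P e j = μ j • (wB hW) ⟨e, j⟩ := by
    intro j; rw [wB_apply]
  simp only [this, map_sum, _root_.map_smul, Finsupp.coe_finset_sum, Finset.sum_apply,
    Finsupp.coe_smul, Pi.smul_apply, (wB hW).repr_self, smul_eq_mul]
  rw [Finset.sum_eq_single k]
  · simp
  · intro b _ hb
    rw [Finsupp.single_apply_eq_zero.mpr, mul_zero]
    intro h
    exact absurd (eq_of_heq (Sigma.mk.inj_iff.mp h).2).symm hb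
  · simp

lemma repr_sum_level_ne (hW : IsWOPS u P) (e : ℕ) (μ : Fin (rdim d e) → ℝ)
    (p : Σ n : ℕ, Fin (rdim d n)) (hp : p.1 ≠ e) :
    (wB hW).repr (∑ j, μ j • P e j) p = 0 := by
  classical
  have : ∀ j : Fin (rdim d e), μ j • P e j = μ j • (wB hW) ⟨e, j⟩ := by
    intro j; rw [wB_apply]
  simp only [this, map_sum, _root_.map_smul, Finsupp.coe_finset_sum, Finset.sum_apply,
    Finsupp.coe_smul, Pi.smul_apply, (wB hW).repr_self, smul_eq_mul]
  have hz : ∀ j : Fin (rdim d e),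
      (Finsupp.single (⟨e, j⟩ : Σ n : ℕ, Fin (rdim d n)) (1:ℝ)) p = 0 := by
    intro j
    rw [Finsupp.single_apply_eq_zero]
    intro h; exact absurd (congrArg Sigma.fst h) hp
  exact Finset.sum_eq_zero (fun j _ => by rw [hz j, mul_zero])

/-- `u (f * g)` for `g` a combination of level-`e` polynomials. -/
lemma u_mul_combo (hW : IsWOPS u P) (f : MPoly d) (e : ℕ) (μ : Fin (rdim d e) → ℝ) :
    u (f * ∑ j, μ j • P e j) = coefAt hW e f ⬝ᵥ (Hmat u P e *ᵥ μ) := by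
  rw [Finset.mul_sum, map_sum]
  have : ∀ j : Fin (rdim d e), u (f * (μ j • P e j)) = μ j * u (f * P e j) := by
    intro j; rw [mul_smul_comm, u.map_smul, smul_eq_mul]
  rw [Finset.sum_congr rfl (fun j _ => this j)]
  simp only [u_mul_eq_sum hW f e, dotProduct, Matrix.mulVec, Finset.mul_sum]
  rw [Finset.sum_comm]
  refine Finset.sum_congr rfl (fun k _ => Finset.sum_congr rfl (fun j _ => ?_))
  show μ j * ((wB hW).repr f ⟨e, k⟩ * u (P e k * P e j))
      = (wB hW).repr f ⟨e, k⟩ * (u (P e k * P e j) * μ j)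
  ring

/-- Degree increase under multiplication by a variable. -/
lemma deg_X_mul_ge {g : MPoly d} (hg : g ≠ 0) (i : Fin d) {t : ℕ}
    (h : (X i * g).totalDegree ≤ t) : g.totalDegree + 1 ≤ t := by
  classical
  have hsupp : g.support.Nonempty := by
    exact MvPolynomial.support_nonempty.mpr hg
  obtain ⟨α, hα, hsup⟩ := Finset.exists_mem_eq_sup g.support hsupp (fun α => α.sum fun _ e => e)
  have hco : coeff (Finsupp.single i 1 + α) (X i * g) = coeff α g := coeff_X_mul α i g
  have hmem : (Finsupp.single i 1 + α) ∈ (X i * g).support :=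
    mem_support_iff.mpr (by rw [hco]; exact mem_support_iff.mp hα)
  have h2 : ((Finsupp.single i 1 + α).sum fun _ e => e) ≤ (X i * g).totalDegree :=
    le_totalDegree hmem
  have h3 : ((Finsupp.single i 1 + α).sum fun _ e => e) = 1 + α.sum fun _ e => e := by
    rw [Finsupp.sum_add_index' (fun _ => rfl) (fun _ _ _ => rfl)]
    simp
  have h4 : g.totalDegree = α.sum fun _ e => e := hsup
  omega

/-- Kill all levels below `M`. -/
lemma kill_below (hW : IsWOPS u P) {f : MPoly d} {N : ℕ} (M : ℕ)
    (hf : f ∈ Submodule.span ℝ (famP P '' {p | p.1 ≤ N}))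
    (h : ∀ m' < M, ∀ j, u (f * P m' j) = 0) :
    f ∈ Submodule.span ℝ (famP P '' {p | p.1 ≤ N ∧ M ≤ p.1}) := by
  induction M with
  | zero => exact Submodule.span_mono (Set.image_mono (fun p hp => show _ ∧ _ from ⟨hp, Nat.zero_le _⟩)) hf
  | succ M ih =>
    have h1 := kill_level hW (ih (fun m' hm' j => h m' (by omega) j)) (h M (by omega))
    refine Submodule.span_mono (Set.image_mono (fun p hp => ?_)) h1
    obtain ⟨⟨h2, h3⟩, h4⟩ := hp
    exact show _ ∧ _ from ⟨h2, by omega⟩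

/-- Generators: variables times a level. -/
def Sx (P : (n : ℕ) → Fin (rdim d n) → MPoly d) (m : ℕ) : Set (MPoly d) :=
  {h | ∃ i l, h = X i * P m l}

lemma Sx_gen_deg (hW : IsWOPS u P) {m : ℕ} {i : Fin d} {l : Fin (rdim d m)} :
    (X i * P m l).totalDegree ≤ m + 1 := by
  refine (totalDegree_mul _ _).trans ?_
  rw [totalDegree_X, hW.deg]
  omega

lemma Sx_span_le (hW : IsWOPS u P) (m : ℕ) :
    Submodule.span ℝ (Sx P m) ≤ Submodule.span ℝ (famP P '' {p | p.1 ≤ m + 1}) := by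
  rw [Submodule.span_le]
  rintro h ⟨i, l, rfl⟩
  exact mem_span_deg_le hW (Sx_gen_deg hW)

lemma orth_span_Sx (hW : IsWOPS u P) {m m' : ℕ} (h : m' + 1 < m) {w : MPoly d}
    (hw : w ∈ Submodule.span ℝ (Sx P m)) (j : Fin (rdim d m')) : u (w * P m' j) = 0 := by
  have hker : Submodule.span ℝ (Sx P m) ≤
      LinearMap.ker (u ∘ₗ LinearMap.mulRight ℝ (P m' j)) := by
    rw [Submodule.span_le]
    rintro g ⟨i, l, rfl⟩
    simp only [SetLike.mem_coe, LinearMap.mem_ker, LinearMap.comp_apply,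
      LinearMap.mulRight_apply]
    have hcomm : X i * P m l * P m' j = (X i * P m' j) * P m l := by ring
    rw [hcomm]
    refine orth_lowdeg hW ?_ l
    calc (X i * P m' j).totalDegree ≤ (X i).totalDegree + (P m' j).totalDegree :=
          totalDegree_mul _ _
      _ = 1 + m' := by rw [totalDegree_X, hW.deg]
      _ < m := by omega
  exact hker hw

lemma coefAt_self (hW : IsWOPS u P) (e : ℕ) (j : Fin (rdim d e)) :
    coefAt hW e (P e j) = Pi.single j 1 := by
  classical
  set v : Fin (rdim d e) → ℝ := Pi.single j 1 with hv
  have hsum : P e j = ∑ k, v k • P e k := by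
    rw [Finset.sum_eq_single j]
    · rw [hv, Pi.single_eq_same, one_smul]
    · intro b _ hb; rw [hv, Pi.single_eq_of_ne hb, zero_smul]
    · intro h; exact absurd (Finset.mem_univ j) h
  funext k
  show (wB hW).repr (P e j) ⟨e, k⟩ = v k
  conv_lhs => rw [hsum]
  exact repr_sum_level_self hW e _ k

section Surj

variable [Nonempty (Fin d)]

lemma lam_eq_sum {r : ℕ} (lam : (Fin r → ℝ) →ₗ[ℝ] ℝ) (x : Fin r → ℝ) :
    lam x = ∑ j, x j * lam (Pi.single j 1) := by
  rw [LinearMap.pi_apply_eq_sum_univ lam x]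
  refine Finset.sum_congr rfl (fun j _ => ?_)
  rw [smul_eq_mul]
  congr 1
  congr 1
  funext k
  rw [Pi.single_apply]
  by_cases h : j = k <;> simp [h, eq_comm]

lemma surj_down (hW : IsWOPS u P) (m : ℕ) :
    Submodule.map (coefAt hW m) (Submodule.span ℝ (Sx P (m+1))) = ⊤ := by
  classical
  by_contra hne
  obtain ⟨lam, hlam0, hlam⟩ :=
    Submodule.exists_dual_map_eq_bot_of_lt_top (lt_top_iff_ne_top.mpr hne) inferInstance
  set lamv : Fin (rdim d m) → ℝ := fun j => lam (Pi.single j 1) with hlamv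
  have hlamx : ∀ x, lam x = ∑ j, x j * lamv j := fun x => lam_eq_sum lam x
  have hlamvne : lamv ≠ 0 := by
    intro h0
    refine hlam0 (LinearMap.ext fun x => ?_)
    rw [hlamx x, h0]
    simp
  have hdet : IsUnit (Hmat u P m).det := isUnit_iff_ne_zero.mpr (hW.Hdet m)
  set μ := (Hmat u P m)⁻¹ *ᵥ lamv with hμ
  have hHμ : Hmat u P m *ᵥ μ = lamv := by
    rw [hμ, Matrix.mulVec_mulVec, Matrix.mul_nonsing_inv _ hdet, Matrix.one_mulVec]
  set g := ∑ j, μ j • P m j with hg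
  have key : ∀ f, u (f * g) = lam (coefAt hW m f) := by
    intro f
    rw [hg, u_mul_combo hW f m μ, hHμ, hlamx (coefAt hW m f)]
    rfl
  have hgen0 : ∀ (i : Fin d) (l : Fin (rdim d (m+1))), u ((X i * P (m+1) l) * g) = 0 := by
    intro i l
    rw [key]
    have hmem : coefAt hW m (X i * P (m+1) l) ∈
        Submodule.map (coefAt hW m) (Submodule.span ℝ (Sx P (m+1))) :=
      ⟨_, Submodule.subset_span ⟨i, l, rfl⟩, rfl⟩
    have h2 : lam (coefAt hW m (X i * P (m+1) l)) ∈
        Submodule.map lam (Submodule.map (coefAt hW m) (Submodule.span ℝ (Sx P (m+1)))) :=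
      Submodule.mem_map_of_mem hmem
    rw [hlam] at h2
    exact (Submodule.mem_bot ℝ).mp h2
  have hμne : μ ≠ 0 := by
    intro h0
    apply hlamvne
    rw [← hHμ, h0, Matrix.mulVec_zero]
  obtain ⟨j0, hj0⟩ := Function.ne_iff.mp hμne
  have hgrepr : (wB hW).repr g ⟨m, j0⟩ = μ j0 := repr_sum_level_self hW m μ j0
  have hgne : g ≠ 0 := by
    intro h0
    rw [h0, map_zero] at hgrepr
    exact hj0 (by simpa using hgrepr.symm)
  have hgdeg : g.totalDegree ≤ m := by
    rw [hg]
    refine totalDegree_finsetSum_le (fun j _ => ?_)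
    exact (totalDegree_smul_le _ _).trans (le_of_eq (hW.deg m j))
  have hXdeg : ∀ i : Fin d, (X i * g).totalDegree ≤ m := by
    intro i
    have h1 : X i * g ∈ Submodule.span ℝ (famP P '' {p | p.1 ≤ m + 1}) := by
      refine mem_span_deg_le hW ?_
      refine (totalDegree_mul _ _).trans ?_
      rw [totalDegree_X]; omega
    have h2 : ∀ l, u ((X i * g) * P (m+1) l) = 0 := by
      intro l
      have : (X i * g) * P (m+1) l = (X i * P (m+1) l) * g := by ring
      rw [this]; exact hgen0 i l
    have h3 := kill_level hW h1 h2
    refine deg_le_of_mem_span hW (fun p hp => ?_) h3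
    obtain ⟨h4, h5⟩ := hp
    simp only [Set.mem_setOf_eq] at h4 h5
    omega
  have hfin : g.totalDegree + 1 ≤ m := deg_X_mul_ge hgne (Classical.arbitrary _) (hXdeg _)
  have hmem : g ∈ Submodule.span ℝ (famP P '' {p | p.1 ≤ g.totalDegree}) :=
    mem_span_deg_le hW le_rfl
  rw [famP_eq_B hW, (wB hW).mem_span_image] at hmem
  have hsupp : (⟨m, j0⟩ : Σ n : ℕ, Fin (rdim d n)) ∈ ((wB hW).repr g).support :=
    Finsupp.mem_support_iff.mpr (by rw [hgrepr]; exact hj0)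
  have := hmem hsupp
  simp only [Set.mem_setOf_eq] at this
  omega

lemma surj_up (hW : IsWOPS u P) (m : ℕ) :
    Submodule.map (coefAt hW (m+1)) (Submodule.span ℝ (Sx P m)) = ⊤ := by
  classical
  by_contra hne
  obtain ⟨lam, hlam0, hlam⟩ :=
    Submodule.exists_dual_map_eq_bot_of_lt_top (lt_top_iff_ne_top.mpr hne) inferInstance
  set lamv : Fin (rdim d (m+1)) → ℝ := fun j => lam (Pi.single j 1) with hlamv
  have hlamx : ∀ x, lam x = ∑ j, x j * lamv j := fun x => lam_eq_sum lam x
  have hlamvne : lamv ≠ 0 := by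
    intro h0
    refine hlam0 (LinearMap.ext fun x => ?_)
    rw [hlamx x, h0]
    simp
  have hdet : IsUnit (Hmat u P (m+1)).det := isUnit_iff_ne_zero.mpr (hW.Hdet (m+1))
  set μ := (Hmat u P (m+1))⁻¹ *ᵥ lamv with hμ
  have hHμ : Hmat u P (m+1) *ᵥ μ = lamv := by
    rw [hμ, Matrix.mulVec_mulVec, Matrix.mul_nonsing_inv _ hdet, Matrix.one_mulVec]
  set g := ∑ j, μ j • P (m+1) j with hg
  have key : ∀ f, u (f * g) = lam (coefAt hW (m+1) f) := by
    intro f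
    rw [hg, u_mul_combo hW f (m+1) μ, hHμ, hlamx (coefAt hW (m+1) f)]
    rfl
  have hgen0 : ∀ (i : Fin d) (l : Fin (rdim d m)), u ((X i * P m l) * g) = 0 := by
    intro i l
    rw [key]
    have hmem : coefAt hW (m+1) (X i * P m l) ∈
        Submodule.map (coefAt hW (m+1)) (Submodule.span ℝ (Sx P m)) :=
      ⟨_, Submodule.subset_span ⟨i, l, rfl⟩, rfl⟩
    have h2 : lam (coefAt hW (m+1) (X i * P m l)) ∈
        Submodule.map lam (Submodule.map (coefAt hW (m+1)) (Submodule.span ℝ (Sx P m))) :=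
      Submodule.mem_map_of_mem hmem
    rw [hlam] at h2
    exact (Submodule.mem_bot ℝ).mp h2
  have hlow : ∀ h : MPoly d, h.totalDegree ≤ m → u (h * g) = 0 := by
    intro h hh
    rw [hg, Finset.mul_sum, map_sum]
    refine Finset.sum_eq_zero (fun j _ => ?_)
    rw [mul_smul_comm, u.map_smul, smul_eq_mul]
    rw [orth_lowdeg hW (by omega : h.totalDegree < m + 1) j, mul_zero]
  have hPg0 : ∀ j, u (P (m+1) j * g) = 0 := by
    intro j
    obtain ⟨c, hh, hdegh, heq⟩ := exists_decomp (P (m+1) j) (le_of_eq (hW.deg (m+1) j))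
    rw [heq, add_mul, map_add, Finset.sum_mul, map_sum]
    have hc0 : u (C c * g) = 0 := hlow _ (by rw [totalDegree_C]; omega)
    rw [hc0, zero_add]
    refine Finset.sum_eq_zero (fun i _ => ?_)
    have hker : Submodule.span ℝ (famP P '' {p | p.1 ≤ m}) ≤
        LinearMap.ker ((u ∘ₗ LinearMap.mulRight ℝ g) ∘ₗ LinearMap.mulLeft ℝ (X i)) := by
      rw [Submodule.span_le]
      rintro w ⟨⟨a, b⟩, ha, rfl⟩
      simp only [Set.mem_setOf_eq] at ha
      simp only [SetLike.mem_coe, LinearMap.mem_ker, LinearMap.comp_apply,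
        LinearMap.mulLeft_apply, LinearMap.mulRight_apply]
      show u ((X i * P a b) * g) = 0
      rcases Nat.eq_or_lt_of_le ha with heqa | hlta
      · subst heqa
        exact hgen0 i b
      · refine hlow _ ?_
        refine (totalDegree_mul _ _).trans ?_
        rw [totalDegree_X, hW.deg]
        omega
    have hmem : hh i ∈ Submodule.span ℝ (famP P '' {p | p.1 ≤ m}) :=
      mem_span_deg_le hW (hdegh i)
    have := hker hmem
    simp only [LinearMap.mem_ker, LinearMap.comp_apply, LinearMap.mulLeft_apply,
      LinearMap.mulRight_apply] at this
    exact this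
  apply hlamvne
  funext j
  have h1 := hPg0 j
  rw [key, coefAt_self hW (m+1) j] at h1
  rw [hlamv]
  exact h1

lemma lem_up (hW : IsWOPS u P) (m : ℕ) (j : Fin (rdim d (m+1))) :
    P (m+1) j ∈ Submodule.span ℝ (Sx P m ∪ famP P '' {p | p.1 = m ∨ p.1 + 1 = m}) := by
  classical
  obtain ⟨w, hwS, hw⟩ : ∃ w ∈ Submodule.span ℝ (Sx P m),
      coefAt hW (m+1) w = Pi.single j 1 := by
    have hmem : (Pi.single j 1 : Fin (rdim d (m+1)) → ℝ) ∈
        Submodule.map (coefAt hW (m+1)) (Submodule.span ℝ (Sx P m)) := by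
      rw [surj_up hW m]; trivial
    exact Submodule.mem_map.mp hmem
  set δ : MPoly d := P (m+1) j - w with hδdef
  have hA : δ ∈ Submodule.span ℝ (famP P '' {p | p.1 ≤ m + 1}) :=
    sub_mem (mem_span_deg_le hW (le_of_eq (hW.deg (m+1) j))) (Sx_span_le hW m hwS)
  have hB := kill_below hW (m - 1) hA (fun m' hm' j' => by
    rw [hδdef, sub_mul, map_sub, hW.orth (m+1) m' (by omega) j j',
      orth_span_Sx hW (by omega : m' + 1 < m) hwS j', sub_zero])
  have hδ : δ ∈ Submodule.span ℝ (famP P '' {p | p.1 = m ∨ p.1 + 1 = m}) := by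
    rw [famP_eq_B hW, (wB hW).mem_span_image] at hB ⊢
    intro p hp
    have h1 := hB hp
    simp only [Set.mem_setOf_eq] at h1 ⊢
    by_contra hc
    push_neg at hc
    have hp1 : p.1 = m + 1 := by omega
    obtain ⟨a, b⟩ := p
    dsimp at hp1
    subst hp1
    simp only [Finset.mem_coe, Finsupp.mem_support_iff] at hp
    apply hp
    have hcoef : (wB hW).repr δ ⟨m+1, b⟩ = coefAt hW (m+1) δ b := rfl
    rw [hcoef, hδdef, map_sub, Pi.sub_apply, coefAt_self hW (m+1) j, hw, sub_self]
  have hsum : P (m+1) j = w + δ := by rw [hδdef]; ring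
  rw [hsum]
  exact add_mem (Submodule.span_mono Set.subset_union_left hwS)
    (Submodule.span_mono Set.subset_union_right hδ)

lemma lem_down (hW : IsWOPS u P) (m : ℕ) (j : Fin (rdim d m)) :
    P m j ∈ Submodule.span ℝ
      (Sx P (m+1) ∪ famP P '' {p | p.1 = m + 1 ∨ p.1 = m + 2}) := by
  classical
  obtain ⟨w, hwS, hw⟩ : ∃ w ∈ Submodule.span ℝ (Sx P (m+1)),
      coefAt hW m w = Pi.single j 1 := by
    have hmem : (Pi.single j 1 : Fin (rdim d m) → ℝ) ∈
        Submodule.map (coefAt hW m) (Submodule.span ℝ (Sx P (m+1))) := by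
      rw [surj_down hW m]; trivial
    exact Submodule.mem_map.mp hmem
  set δ : MPoly d := P m j - w with hδdef
  have hA : δ ∈ Submodule.span ℝ (famP P '' {p | p.1 ≤ m + 2}) := by
    refine sub_mem (mem_span_deg_le hW (by rw [hW.deg]; omega)) ?_
    exact Submodule.span_le.mpr
      (fun h hmem => by
        obtain ⟨i, l, rfl⟩ := hmem
        exact mem_span_deg_le hW ((Sx_gen_deg hW).trans (by omega))) hwS
  have hB := kill_below hW m hA (fun m' hm' j' => by
    rw [hδdef, sub_mul, map_sub, hW.orth m m' (by omega) j j',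
      orth_span_Sx hW (by omega : m' + 1 < m + 1) hwS j', sub_zero])
  have hδ : δ ∈ Submodule.span ℝ (famP P '' {p | p.1 = m + 1 ∨ p.1 = m + 2}) := by
    rw [famP_eq_B hW, (wB hW).mem_span_image] at hB ⊢
    intro p hp
    have h1 := hB hp
    simp only [Set.mem_setOf_eq] at h1 ⊢
    by_contra hc
    push_neg at hc
    have hp1 : p.1 = m := by omega
    obtain ⟨a, b⟩ := p
    dsimp at hp1
    subst hp1
    simp only [Finset.mem_coe, Finsupp.mem_support_iff] at hp
    apply hp
    have hcoef : (wB hW).repr δ ⟨a, b⟩ = coefAt hW a δ b := rfl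
    rw [hcoef, hδdef, map_sub, Pi.sub_apply, coefAt_self hW a j, hw, sub_self]
  have hsum : P m j = w + δ := by rw [hδdef]; ring
  rw [hsum]
  exact add_mem (Submodule.span_mono Set.subset_union_left hwS)
    (Submodule.span_mono Set.subset_union_right hδ)

end Surj

/-- The combination map `(a, b) ↦ Σ aₗ P_{n+1,l} + Σ bₗ P_{n,l}`. -/
def Theta (P : (n : ℕ) → Fin (rdim d n) → MPoly d) (n : ℕ) :
    ((Fin (rdim d (n+1)) → MPoly d) × (Fin (rdim d n) → MPoly d)) →ₗ[ℝ] MPoly d where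
  toFun := fun ab => (∑ l, ab.1 l * P (n+1) l) + ∑ l, ab.2 l * P n l
  map_add' := fun x y => by
    simp only [Pi.add_apply, add_mul, Finset.sum_add_distrib, Prod.fst_add, Prod.snd_add]
    ring
  map_smul' := fun c x => by
    simp only [Prod.smul_fst, Prod.smul_snd, Pi.smul_apply, smul_mul_assoc, RingHom.id_apply]
    rw [← Finset.smul_sum, ← Finset.smul_sum, smul_add]

lemma Theta_apply (P : (n : ℕ) → Fin (rdim d n) → MPoly d) (n : ℕ)
    (ab : (Fin (rdim d (n+1)) → MPoly d) × (Fin (rdim d n) → MPoly d)) :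
    Theta P n ab = (∑ l, ab.1 l * P (n+1) l) + ∑ l, ab.2 l * P n l := rfl

/-- Pairs of coefficient vectors with bounded degrees. -/
def Dsub (d : ℕ) (n t : ℕ) :
    Submodule ℝ ((Fin (rdim d (n+1)) → MPoly d) × (Fin (rdim d n) → MPoly d)) :=
  (Submodule.pi Set.univ fun _ => restrictTotalDegree (Fin d) ℝ t).prod
    (Submodule.pi Set.univ fun _ => restrictTotalDegree (Fin d) ℝ (t+1))

/-- The space of combinations with coefficient degrees `≤ t` and `≤ t+1`. -/
def Vsub (P : (n : ℕ) → Fin (rdim d n) → MPoly d) (n t : ℕ) : Submodule ℝ (MPoly d) :=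
  Submodule.map (Theta P n) (Dsub d n t)

lemma Vsub_mono (P : (n : ℕ) → Fin (rdim d n) → MPoly d) (n : ℕ) {t t' : ℕ} (h : t ≤ t') :
    Vsub P n t ≤ Vsub P n t' := by
  have key : ∀ t t' : ℕ, t ≤ t' →
      restrictTotalDegree (Fin d) ℝ t ≤ restrictTotalDegree (Fin d) ℝ t' := by
    intro t t' htt f hf
    exact (mem_restrictTotalDegree _ _ _).mpr
      (le_trans ((mem_restrictTotalDegree _ _ _).mp hf) htt)
  refine Submodule.map_mono ?_
  exact Submodule.prod_mono (Submodule.pi_mono (fun _ _ => key _ _ (by omega)))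
    (Submodule.pi_mono (fun _ _ => key _ _ (by omega)))

lemma single_mul_mem_V (P : (n : ℕ) → Fin (rdim d n) → MPoly d) (n t : ℕ)
    {g : MPoly d} (hg : g.totalDegree ≤ t + 1) (l : Fin (rdim d n)) :
    g * P n l ∈ Vsub P n t := by
  classical
  refine ⟨(fun _ => 0, Pi.single l g), ⟨?_, ?_⟩, ?_⟩
  · intro i _
    simp only [Prod.fst]
    simp only [SetLike.mem_coe, mem_restrictTotalDegree]
    simp
  · intro i _
    simp only [Prod.snd]
    simp only [SetLike.mem_coe, mem_restrictTotalDegree]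
    by_cases h : i = l
    · subst h; rw [Pi.single_eq_same]; exact hg
    · rw [Pi.single_eq_of_ne h]; simp
  · rw [Theta_apply]
    dsimp only
    rw [Finset.sum_eq_zero (fun l' _ => zero_mul _), zero_add]
    rw [Finset.sum_eq_single l]
    · rw [Pi.single_eq_same]
    · intro b _ hb; rw [Pi.single_eq_of_ne hb, zero_mul]
    · intro h; exact absurd (Finset.mem_univ l) h

lemma single_mul_mem_V' (P : (n : ℕ) → Fin (rdim d n) → MPoly d) (n t : ℕ)
    {g : MPoly d} (hg : g.totalDegree ≤ t) (l : Fin (rdim d (n+1))) :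
    g * P (n+1) l ∈ Vsub P n t := by
  classical
  refine ⟨(Pi.single l g, fun _ => 0), ⟨?_, ?_⟩, ?_⟩
  · intro i _
    simp only [Prod.fst]
    simp only [SetLike.mem_coe, mem_restrictTotalDegree]
    by_cases h : i = l
    · subst h; rw [Pi.single_eq_same]; exact hg
    · rw [Pi.single_eq_of_ne h]; simp
  · intro i _
    simp only [Prod.snd]
    simp only [SetLike.mem_coe, mem_restrictTotalDegree]
    simp
  · rw [Theta_apply]
    dsimp only
    rw [Finset.sum_eq_zero (fun l' _ => zero_mul (P n l')), add_zero]
    rw [Finset.sum_eq_single l]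
    · rw [Pi.single_eq_same]
    · intro b _ hb; rw [Pi.single_eq_of_ne hb, zero_mul]
    · intro h; exact absurd (Finset.mem_univ l) h

lemma Pn_mem_V (P : (n : ℕ) → Fin (rdim d n) → MPoly d) (n t : ℕ) (l : Fin (rdim d n)) :
    P n l ∈ Vsub P n t := by
  have := single_mul_mem_V P n t (g := 1) (by simp) l
  rwa [one_mul] at this

lemma Pn1_mem_V (P : (n : ℕ) → Fin (rdim d n) → MPoly d) (n t : ℕ) (l : Fin (rdim d (n+1))) :
    P (n+1) l ∈ Vsub P n t := by
  have := single_mul_mem_V' P n t (g := 1) (by simp) l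
  rwa [one_mul] at this

lemma X_mul_mem_V (P : (n : ℕ) → Fin (rdim d n) → MPoly d) (n t : ℕ) (i : Fin d)
    {f : MPoly d} (hf : f ∈ Vsub P n t) : X i * f ∈ Vsub P n (t + 1) := by
  classical
  obtain ⟨⟨a, b⟩, hab, rfl⟩ := hf
  obtain ⟨ha, hb⟩ := hab
  refine ⟨(fun l => X i * a l, fun l => X i * b l), ⟨?_, ?_⟩, ?_⟩
  · intro l _
    simp only [SetLike.mem_coe, mem_restrictTotalDegree]
    refine (totalDegree_mul _ _).trans ?_
    rw [totalDegree_X]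
    have := (mem_restrictTotalDegree _ _ _).mp (ha l (Set.mem_univ l))
    dsimp only at this
    omega
  · intro l _
    simp only [SetLike.mem_coe, mem_restrictTotalDegree]
    refine (totalDegree_mul _ _).trans ?_
    rw [totalDegree_X]
    have := (mem_restrictTotalDegree _ _ _).mp (hb l (Set.mem_univ l))
    dsimp only at this
    omega
  · rw [Theta_apply, Theta_apply]
    dsimp only
    rw [mul_add, Finset.mul_sum, Finset.mul_sum]
    congr 1 <;> exact Finset.sum_congr rfl (fun l _ => by ring)

section Levels

variable [Nonempty (Fin d)]

lemma levels_mem_V (hW : IsWOPS u P) (n : ℕ) :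
    ∀ t e (j : Fin (rdim d e)), ((n ≤ e ∧ e ≤ n + 1 + t) ∨ (e ≤ n ∧ n ≤ e + 1 + t)) →
      P e j ∈ Vsub P n t := by
  intro t
  induction t with
  | zero =>
    intro e j he
    have hcase : e = n ∨ e = n + 1 ∨ e + 1 = n := by omega
    rcases hcase with heq | heq | heq
    · subst heq; exact Pn_mem_V P e 0 j
    · subst heq; exact Pn1_mem_V P n 0 j
    · subst heq
      refine Submodule.span_le.mpr ?_ (lem_down hW e j)
      rintro x (⟨i, l, rfl⟩ | ⟨⟨a, b⟩, hp, rfl⟩)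
      · exact single_mul_mem_V P (e+1) 0 (by rw [totalDegree_X]) l
      · simp only [Set.mem_setOf_eq] at hp
        rcases hp with hp | hp <;> subst hp
        · exact Pn_mem_V P (e+1) 0 b
        · exact Pn1_mem_V P (e+1) 0 b
  | succ t ih =>
    intro e j he
    by_cases hin : (n ≤ e ∧ e ≤ n + 1 + t) ∨ (e ≤ n ∧ n ≤ e + 1 + t)
    · exact Vsub_mono P n (Nat.le_succ t) (ih e j hin)
    · have hcase : e = n + t + 2 ∨ e + t + 2 = n := by omega
      rcases hcase with heq | heq
      · subst heq
        have hup := lem_up hW (n + t + 1) j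
        refine Submodule.span_le.mpr ?_ hup
        rintro x (⟨i, l, rfl⟩ | ⟨⟨a, b⟩, hp, rfl⟩)
        · exact X_mul_mem_V P n t i (ih (n+t+1) l (Or.inl (by omega)))
        · simp only [Set.mem_setOf_eq] at hp
          exact Vsub_mono P n (Nat.le_succ t) (ih a b (Or.inl (by omega)))
      · refine Submodule.span_le.mpr ?_ (lem_down hW e j)
        rintro x (⟨i, l, rfl⟩ | ⟨⟨a, b⟩, hp, rfl⟩)
        · exact X_mul_mem_V P n t i (ih (e+1) l (Or.inr (by omega)))
        · simp only [Set.mem_setOf_eq] at hp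
          exact Vsub_mono P n (Nat.le_succ t) (ih a b (Or.inr (by omega)))

end Levels
end SSR

lemma pderiv_eq_zero_of_totalDegree_eq_zero {d : ℕ} {f : MPoly d}
    (hf : f.totalDegree = 0) (i : Fin d) : pderiv i f = 0 := by
  classical
  have h := (totalDegree_eq_zero_iff _ f).mp hf
  have hrw : pderiv i f = ∑ s ∈ f.support, pderiv i (monomial s (coeff s f)) := by
    rw [← map_sum]; conv_lhs => rw [f.as_sum]
  rw [hrw]
  refine Finset.sum_eq_zero (fun s hs => ?_)
  rw [pderiv_monomial, h s hs i]
  simp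

/-- **Short structure relation.**
If `u` is semiclassical with data `Φ` (symmetric, degree `p`), `Ψ` (degree
`q ≥ 1`), `s = max{p−2, q−1}`, and `{ℙ_n}` is a WOPS for `u`, then for every
`n ≥ s+1` there are polynomial matrices `M₁ⁿ` (degree ≤ `s`) and `M₂ⁿ`
(degree ≤ `s+1`) with `Φ ∇ℙ_nᵗ = (I_d ⊗ ℙ_{n+1}ᵗ) M₁ⁿ + (I_d ⊗ ℙ_nᵗ) M₂ⁿ`. -/
theorem short_structure_relation
    {d : ℕ} (u : MomF d) (P : (n : ℕ) → Fin (rdim d n) → MPoly d)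
    (hW : IsWOPS u P)
    (Φ : Matrix (Fin d) (Fin d) (MPoly d)) (hΦsym : Φ.IsSymm)
    (Ψ : Fin d → MPoly d)
    (p q : ℕ) (hp : matDeg Φ = p) (hq : vecDeg Ψ = q) (hq1 : 1 ≤ q)
    (hPearson : Pearson u Φ Ψ)
    (hdet : (mApply u Φ).det ≠ 0)
    (s : ℕ) (hs : s = max (p - 2) (q - 1)) :
    ∀ n : ℕ, s + 1 ≤ n →
      ∃ M₁ : Matrix (Fin d × Fin (rdim d (n + 1))) (Fin (rdim d n)) (MPoly d),
      ∃ M₂ : Matrix (Fin d × Fin (rdim d n)) (Fin (rdim d n)) (MPoly d),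
        matDeg M₁ ≤ s ∧ matDeg M₂ ≤ s + 1 ∧
        Φ * gradT (P n) = kronIdRow (P (n + 1)) * M₁ + kronIdRow (P n) * M₂ := by
  classical
  intro n hn
  rcases Nat.eq_zero_or_pos d with hd0 | hdpos
  · subst hd0
    refine ⟨0, 0, ?_, ?_, ?_⟩
    · refine Finset.sup_le (fun z _ => ?_)
      simp
    · refine Finset.sup_le (fun z _ => ?_)
      simp
    · ext i k
      exact i.elim0
  haveI : Nonempty (Fin d) := ⟨⟨0, hdpos⟩⟩
  have hple : p - 2 ≤ s := hs ▸ le_max_left _ _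
  have hqle : q - 1 ≤ s := hs ▸ le_max_right _ _
  have hΦdeg : ∀ i j, (Φ i j).totalDegree ≤ p := fun i j =>
    hp ▸ Finset.le_sup (f := fun z : Fin d × Fin d => (Φ z.1 z.2).totalDegree)
      (Finset.mem_univ (i, j))
  have hΨdeg : ∀ i, (Ψ i).totalDegree ≤ q := fun i =>
    hq ▸ Finset.le_sup (f := fun i => (Ψ i).totalDegree) (Finset.mem_univ i)
  have hdegf : ∀ (i : Fin d) (k : Fin (rdim d n)),
      ((Φ * gradT (P n)) i k).totalDegree ≤ n + s + 1 := by
    intro i k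
    rw [Matrix.mul_apply]
    refine totalDegree_finsetSum_le (fun j _ => ?_)
    refine (totalDegree_mul _ _).trans ?_
    have h1 := hΦdeg i j
    have h2 : (gradT (P n) j k).totalDegree ≤ n - 1 := by
      show (pderiv j (P n k)).totalDegree ≤ n - 1
      exact (totalDegree_pderiv_le j (P n k)).trans (by rw [hW.deg])
    omega
  have horthf : ∀ (i : Fin d) (k : Fin (rdim d n)) (m : ℕ), m + s + 2 ≤ n →
      ∀ l : Fin (rdim d m), u ((Φ * gradT (P n)) i k * P m l) = 0 := by
    intro i k m hm l
    have hPe := hPearson (P n k * P m l) i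
    set g : MPoly d := (∑ j, Φ i j * pderiv j (P m l)) + Ψ i * P m l with hgdef
    have hterm : ∀ j : Fin d, Φ i j * pderiv j (P n k * P m l)
        = Φ i j * pderiv j (P n k) * P m l + Φ i j * pderiv j (P m l) * P n k := by
      intro j; rw [pderiv_mul]; ring
    have halg : (∑ j, Φ i j * pderiv j (P n k * P m l)) + Ψ i * (P n k * P m l)
        = (Φ * gradT (P n)) i k * P m l + g * P n k := by
      rw [Finset.sum_congr rfl (fun j _ => hterm j), Finset.sum_add_distrib, hgdef,
        Matrix.mul_apply, Finset.sum_mul, add_mul, Finset.sum_mul]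
      have e1 : ∀ j : Fin d, Φ i j * gradT (P n) j k * P m l
          = Φ i j * pderiv j (P n k) * P m l := fun j => rfl
      rw [Finset.sum_congr rfl (fun j _ => e1 j)]
      ring
    have hA : (∑ j, Φ i j * pderiv j (P m l)).totalDegree ≤ n - 1 := by
      refine totalDegree_finsetSum_le (fun j _ => ?_)
      by_cases hm0 : m = 0
      · subst hm0
        rw [pderiv_eq_zero_of_totalDegree_eq_zero (hW.deg 0 l) j, mul_zero]
        simp
      · refine (totalDegree_mul _ _).trans ?_
        have h3 := totalDegree_pderiv_le j (P m l)
        rw [hW.deg] at h3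
        have h4 := hΦdeg i j
        omega
    have hB : (Ψ i * P m l).totalDegree ≤ n - 1 := by
      refine (totalDegree_mul _ _).trans ?_
      have h3 := hΨdeg i
      have h4 := hW.deg m l
      omega
    have hgdeg : g.totalDegree < n := by
      refine lt_of_le_of_lt (totalDegree_add _ _) (max_lt ?_ ?_)
      · omega
      · omega
    have hgu : u (g * P n k) = 0 := SSR.orth_lowdeg hW hgdeg k
    rw [halg, map_add, hgu, add_zero] at hPe
    exact hPe
  have hfV : ∀ (i : Fin d) (k : Fin (rdim d n)),
      (Φ * gradT (P n)) i k ∈ SSR.Vsub P n s := by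
    intro i k
    have h1 := SSR.mem_span_deg_le hW (hdegf i k)
    have h2 := SSR.kill_below hW (n - s - 1) h1 (fun m' hm' l => horthf i k m' (by omega) l)
    refine Submodule.span_le.mpr ?_ h2
    rintro x ⟨⟨a, b⟩, hab, rfl⟩
    simp only [Set.mem_setOf_eq] at hab
    rcases le_or_gt n a with hna | hna
    · exact SSR.levels_mem_V hW n s a b (Or.inl (by omega))
    · exact SSR.levels_mem_V hW n s a b (Or.inr (by omega))
  have hmain : ∀ (i : Fin d) (k : Fin (rdim d n)),
      ∃ (a : Fin (rdim d (n+1)) → MPoly d) (b : Fin (rdim d n) → MPoly d),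
        (∀ l, (a l).totalDegree ≤ s) ∧ (∀ l, (b l).totalDegree ≤ s + 1) ∧
        (Φ * gradT (P n)) i k = (∑ l, a l * P (n+1) l) + ∑ l, b l * P n l := by
    intro i k
    obtain ⟨⟨a, b⟩, hab, heq⟩ := hfV i k
    obtain ⟨ha, hb⟩ := hab
    refine ⟨a, b, fun l => ?_, fun l => ?_, ?_⟩
    · have h5 := (mem_restrictTotalDegree _ _ _).mp (ha l (Set.mem_univ l))
      dsimp only at h5
      exact h5
    · have h5 := (mem_restrictTotalDegree _ _ _).mp (hb l (Set.mem_univ l))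
      dsimp only at h5
      exact h5
    · rw [← heq, SSR.Theta_apply]
  choose A B hdA hdB hEq using hmain
  set M₁ : Matrix (Fin d × Fin (rdim d (n + 1))) (Fin (rdim d n)) (MPoly d) :=
    Matrix.of (fun il k => A il.1 k il.2) with hM₁
  set M₂ : Matrix (Fin d × Fin (rdim d n)) (Fin (rdim d n)) (MPoly d) :=
    Matrix.of (fun il k => B il.1 k il.2) with hM₂
  refine ⟨M₁, M₂, ?_, ?_, ?_⟩
  · exact Finset.sup_le (fun z _ => hdA z.1.1 z.2 z.1.2)
  · exact Finset.sup_le (fun z _ => hdB z.1.1 z.2 z.1.2)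
  · refine Matrix.ext (fun i k => ?_)
    rw [hEq i k, Matrix.add_apply, Matrix.mul_apply, Matrix.mul_apply]
    have hpart1 : ∑ jl : Fin d × Fin (rdim d (n+1)), kronIdRow (P (n+1)) i jl * M₁ jl k
        = ∑ l, A i k l * P (n+1) l := by
      rw [Fintype.sum_prod_type]
      rw [Finset.sum_eq_single_of_mem i (Finset.mem_univ i) (fun j _ hj =>
        Finset.sum_eq_zero (fun l _ => by
          have hz : kronIdRow (P (n+1)) i (j, l) = 0 := if_neg (fun h => hj h.symm)
          rw [hz, zero_mul]))]
      refine Finset.sum_congr rfl (fun l _ => ?_)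
      have hz : kronIdRow (P (n+1)) i (i, l) = P (n+1) l := if_pos rfl
      rw [hz]
      have hm : M₁ (i, l) k = A i k l := rfl
      rw [hm, mul_comm]
    have hpart2 : ∑ jl : Fin d × Fin (rdim d n), kronIdRow (P n) i jl * M₂ jl k
        = ∑ l, B i k l * P n l := by
      rw [Fintype.sum_prod_type]
      rw [Finset.sum_eq_single_of_mem i (Finset.mem_univ i) (fun j _ hj =>
        Finset.sum_eq_zero (fun l _ => by
          have hz : kronIdRow (P n) i (j, l) = 0 := if_neg (fun h => hj h.symm)
          rw [hz, zero_mul]))]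
      refine Finset.sum_congr rfl (fun l _ => ?_)
      have hz : kronIdRow (P n) i (i, l) = P n l := if_pos rfl
      rw [hz]
      have hm : M₂ (i, l) k = B i k l := rfl
      rw [hm, mul_comm]
    rw [hpart1, hpart2]
end
end

section
/- Let u be a quasi-definite moment functional on real polynomials in d variables with a WOPS {ℙ_n}_{n≥0} normalized so that ∇ℙ_1^t = I_d, let Φ be a symmetric d×d polynomial matrix with det⟨u, Φ⟩ ≠ 0, and let s ≥ 0 be an integer with s ≥ deg Φ − 2. Assume that ⟨u, (∇ℙ_m^t)^t Φ ∇ℙ_n^t⟩ = 0 for every n ≥ s+1 and every 0 ≤ m < n−s. Then, setting Ψ = −Σ_{i=0}^{s+1} ⟨u, (∇ℙ_1^t)^t Φ ∇ℙ_i^t⟩ H_i^{−1} ℙ_i, a d×1 polynomial matrix of degree at most s+1, the moment functional u satisfies the matrix Pearson equation div(Φ u) = Ψ^t u. -/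
open MvPolynomial Matrix Finset MeasureTheory

noncomputable section

/-- The canonical identification `Fin d ≃ Fin (r_1)` (since `r_1 = d`). -/
def fin1cast (d : ℕ) (a : Fin d) : Fin (rdim d 1) :=
  Fin.cast (by simp [rdim, Nat.add_sub_cancel_left]) a

/-- The candidate Pearson polynomial vector
`Ψ = −Σ_{i=0}^{s+1} ⟨u, (∇ℙ_1ᵗ)ᵗ Φ ∇ℙ_iᵗ⟩ H_i⁻¹ ℙ_i`. -/
def psiDef {d : ℕ} (u : MomF d) (P : (n : ℕ) → Fin (rdim d n) → MPoly d)
    (Φ : Matrix (Fin d) (Fin d) (MPoly d)) (s : ℕ) : Fin d → MPoly d :=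
  fun a => -∑ i ∈ Finset.range (s + 2), ∑ k,
    MvPolynomial.C ((mApply u ((gradT (P 1))ᵀ * Φ * gradT (P i)) * (Hmat u P i)⁻¹)
      (fin1cast d a) k) * P i k

/-- **Converse: quasi-orthogonality implies Pearson.**
Let `u` be quasi-definite with WOPS `{ℙ_n}` normalized so that `∇ℙ_1ᵗ = I_d`,
`Φ` symmetric with `det⟨u,Φ⟩ ≠ 0`, `s ≥ deg Φ − 2`. If
`⟨u, (∇ℙ_mᵗ)ᵗ Φ ∇ℙ_nᵗ⟩ = 0` for all `n ≥ s+1`, `0 ≤ m < n−s`, then with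
`Ψ = −Σ_{i=0}^{s+1} ⟨u, (∇ℙ_1ᵗ)ᵗ Φ ∇ℙ_iᵗ⟩ H_i⁻¹ ℙ_i` (of degree ≤ `s+1`),
`u` satisfies `div(Φ u) = Ψᵗ u`. -/
theorem quasi_orthogonality_implies_pearson
    {d : ℕ} (u : MomF d) (P : (n : ℕ) → Fin (rdim d n) → MPoly d)
    (hW : IsWOPS u P)
    (hnorm : ∀ (i : Fin d) (k : Fin (rdim d 1)),
      pderiv i (P 1 k) = if (i : ℕ) = (k : ℕ) then 1 else 0)
    (Φ : Matrix (Fin d) (Fin d) (MPoly d)) (hΦsym : Φ.IsSymm)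
    (hdet : (mApply u Φ).det ≠ 0)
    (s : ℕ) (hs : matDeg Φ - 2 ≤ s)
    (hqo : ∀ n m : ℕ, s + 1 ≤ n → m + s < n →
      mApply u ((gradT (P m))ᵀ * Φ * gradT (P n)) = 0) :
    vecDeg (psiDef u P Φ s) ≤ s + 1 ∧ Pearson u Φ (psiDef u P Φ s) := by
  constructor
  · -- degree bound
    apply Finset.sup_le
    intro a _
    simp only [psiDef, totalDegree_neg]
    refine le_trans (totalDegree_finset_sum _ _) (Finset.sup_le fun i hi => ?_)
    refine le_trans (totalDegree_finset_sum _ _) (Finset.sup_le fun l _ => ?_)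
    calc (MvPolynomial.C _ * P i l).totalDegree
        ≤ (MvPolynomial.C (σ := Fin d)
            ((mApply u ((gradT (P 1))ᵀ * Φ * gradT (P i)) * (Hmat u P i)⁻¹)
              (fin1cast d a) l)).totalDegree + (P i l).totalDegree :=
          totalDegree_mul _ _
      _ ≤ 0 + i := by rw [totalDegree_C, hW.deg]
      _ ≤ s + 1 := by simp only [Finset.mem_range] at hi; omega
  · -- Pearson equation
    intro f a
    -- the scalar functional f ↦ ⟨u, (Φ ∇f)_a + Ψ_a f⟩ as a linear map
    let T : MPoly d →ₗ[ℝ] ℝ :=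
      { toFun := fun g => u (∑ j, Φ a j * pderiv j g + psiDef u P Φ s a * g)
        map_add' := by
          intro g₁ g₂
          simp [mul_add, Finset.sum_add_distrib, add_add_add_comm]
        map_smul' := by
          intro c g
          simp [mul_smul_comm, ← Finset.smul_sum, ← smul_add, smul_eq_mul] }
    -- key computation on basis elements
    have key : ∀ n (k : Fin (rdim d n)), T (P n k) = 0 := by
      intro n k
      have hTval : T (P n k) = u (∑ j, Φ a j * pderiv j (P n k))
          + u (psiDef u P Φ s a * P n k) := by
        show u _ = _
        rw [map_add]
      -- the first term equals the (a,k) entry of M_n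
      have hfirst : u (∑ j, Φ a j * pderiv j (P n k)) =
          mApply u ((gradT (P 1))ᵀ * Φ * gradT (P n)) (fin1cast d a) k := by
        have hentry : ((gradT (P 1))ᵀ * Φ * gradT (P n)) (fin1cast d a) k
            = ∑ j, Φ a j * pderiv j (P n k) := by
          have hval : ∀ i : Fin d,
              ((i : ℕ) = ((fin1cast d a : Fin (rdim d 1)) : ℕ)) ↔ i = a := by
            intro i
            simp [fin1cast, Fin.ext_iff]
          simp only [Matrix.mul_apply, gradT, Matrix.transpose_apply, Matrix.of_apply,
            hnorm, hval]
          refine Finset.sum_congr rfl fun j _ => ?_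
          congr 1
          simp
        rw [mApply, Matrix.of_apply, hentry]
      -- expand the second term
      have hsecond : u (psiDef u P Φ s a * P n k) =
          -∑ i ∈ Finset.range (s + 2), ∑ l,
            (mApply u ((gradT (P 1))ᵀ * Φ * gradT (P i)) * (Hmat u P i)⁻¹)
              (fin1cast d a) l * u (P i l * P n k) := by
        simp only [psiDef, neg_mul, Finset.sum_mul, map_neg, map_sum, mul_assoc,
          ← MvPolynomial.smul_eq_C_mul, smul_mul_assoc, LinearMap.map_smul, smul_eq_mul]
      by_cases hn : n ≤ s + 1
      · -- only the i = n term survives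
        have hsum : (∑ i ∈ Finset.range (s + 2), ∑ l,
            (mApply u ((gradT (P 1))ᵀ * Φ * gradT (P i)) * (Hmat u P i)⁻¹)
              (fin1cast d a) l * u (P i l * P n k))
            = ∑ l, (mApply u ((gradT (P 1))ᵀ * Φ * gradT (P n)) * (Hmat u P n)⁻¹)
              (fin1cast d a) l * u (P n l * P n k) := by
          refine Finset.sum_eq_single_of_mem n (by simp only [Finset.mem_range]; omega)
            fun i _ hne => ?_
          simp [hW.orth i n hne]
        have hunit : IsUnit (Hmat u P n).det :=
          isUnit_iff_ne_zero.mpr (hW.Hdet n)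
        have hcancel : ∑ l, (mApply u ((gradT (P 1))ᵀ * Φ * gradT (P n)) * (Hmat u P n)⁻¹)
              (fin1cast d a) l * u (P n l * P n k)
            = mApply u ((gradT (P 1))ᵀ * Φ * gradT (P n)) (fin1cast d a) k := by
          have hH : ∀ l, u (P n l * P n k) = Hmat u P n l k := fun l => rfl
          simp only [hH]
          rw [← Matrix.mul_apply, Matrix.mul_assoc, Matrix.nonsing_inv_mul _ hunit,
            Matrix.mul_one]
        rw [hTval, hfirst, hsecond, hsum, hcancel]
        ring
      · -- n ≥ s + 2 : both terms vanish
        have h0 : mApply u ((gradT (P 1))ᵀ * Φ * gradT (P n)) = 0 :=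
          hqo n 1 (by omega) (by omega)
        have hz2 : u (psiDef u P Φ s a * P n k) = 0 := by
          rw [hsecond]
          refine neg_eq_zero.mpr (Finset.sum_eq_zero fun i hi => ?_)
          simp only [Finset.mem_range] at hi
          have hne : i ≠ n := by omega
          simp [hW.orth i n hne]
        rw [hTval, hfirst, h0, hz2]
        simp
    -- extend to all polynomials by the span property
    have hker : Submodule.span ℝ {g | ∃ m, ∃ k, P m k = g} ≤ LinearMap.ker T := by
      rw [Submodule.span_le]
      rintro g ⟨m, k, rfl⟩
      exact LinearMap.mem_ker.mpr (key m k)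
    have hspan : f ∈ Submodule.span ℝ {g | ∃ m, ∃ k, P m k = g} := by
      have h1 : f ∈ MvPolynomial.restrictTotalDegree (Fin d) ℝ f.totalDegree := by
        rw [MvPolynomial.mem_restrictTotalDegree]
      refine Submodule.span_mono ?_ (hW.span f.totalDegree h1)
      rintro g ⟨m, _, k, rfl⟩
      exact ⟨m, k, rfl⟩
    have h2 : f ∈ LinearMap.ker T := hker hspan
    rw [LinearMap.mem_ker] at h2
    exact h2
end
end

section
/- Let u be a moment functional on real polynomials in d variables satisfying the matrix Pearson equation div(Φ u) = Ψ^t u, with Φ a symmetric d×d polynomial matrix and Ψ a d×1 polynomial matrix, and let L be the associated second-order operator. Then for all polynomials f and g: ⟨u, f · L[g]⟩ = −⟨u, (∇f)^t Φ ∇g⟩. -/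
open MvPolynomial Matrix Finset MeasureTheory

noncomputable section

/-- If `u` satisfies the matrix Pearson equation
`div(Φ u) = Ψᵗ u` with `Φ` symmetric, and `L` is the associated second-order
operator, then `⟨u, f · L[g]⟩ = −⟨u, (∇f)ᵗ Φ ∇g⟩` for all polynomials `f, g`. -/
theorem pearson_bilinear_identity
    {d : ℕ} (u : MomF d)
    (Φ : Matrix (Fin d) (Fin d) (MPoly d)) (hΦsym : Φ.IsSymm)
    (Ψ : Fin d → MPoly d)
    (hPearson : Pearson u Φ Ψ) :
    ∀ f g : MPoly d,
      u (f * Lop Φ Ψ g) = -u (∑ i, ∑ j, pderiv i f * Φ i j * pderiv j g) := by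
  intro f g
  have key : u (∑ i, (∑ j, Φ i j * pderiv j (f * pderiv i g) + Ψ i * (f * pderiv i g))) = 0 := by
    rw [map_sum]
    exact Finset.sum_eq_zero fun i _ => hPearson (f * pderiv i g) i
  have E : (∑ i, (∑ j, Φ i j * pderiv j (f * pderiv i g) + Ψ i * (f * pderiv i g)))
      = f * Lop Φ Ψ g + ∑ i, ∑ j, pderiv i f * Φ i j * pderiv j g := by
    simp only [pderiv_mul, mul_add, Finset.sum_add_distrib, Lop, Finset.mul_sum]
    have h1 : ∑ i, ∑ j, Φ i j * (f * pderiv j (pderiv i g))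
        = ∑ i, ∑ j, f * (Φ i j * pderiv i (pderiv j g)) := by
      rw [Finset.sum_comm]
      exact Finset.sum_congr rfl fun i _ => Finset.sum_congr rfl fun j _ => by
        rw [hΦsym.apply]; ring
    have h2 : ∑ i, ∑ j, Φ i j * (pderiv j f * pderiv i g)
        = ∑ i, ∑ j, pderiv i f * Φ i j * pderiv j g := by
      rw [Finset.sum_comm]
      exact Finset.sum_congr rfl fun i _ => Finset.sum_congr rfl fun j _ => by
        rw [hΦsym.apply]; ring
    have h3 : ∑ i, Ψ i * (f * pderiv i g) = ∑ i, f * (Ψ i * pderiv i g) :=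
      Finset.sum_congr rfl fun i _ => by ring
    rw [h1, h2, h3]
    ring
  rw [E, map_add] at key
  linarith
end
end

section
/- Let u be a moment functional on real polynomials in d variables satisfying the matrix Pearson equation div(Φ u) = Ψ^t u, with Φ a symmetric d×d polynomial matrix and Ψ a d×1 polynomial matrix, and let L be the associated second-order operator. Then the Lagrange adjoint of L annihilates u; that is, ⟨u, L[f]⟩ = 0 for every polynomial f. -/
open MvPolynomial Matrix Finset MeasureTheory

noncomputable section

/-- **The Lagrange adjoint annihilates `u`.**
If `u` satisfies the matrix Pearson equation `div(Φ u) = Ψᵗ u` with `Φ`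
symmetric, and `L` is the associated second-order operator, then
`⟨u, L[f]⟩ = 0` for every polynomial `f`, i.e. `L*[u] = 0`. -/
theorem lagrange_adjoint_annihilates
    {d : ℕ} (u : MomF d)
    (Φ : Matrix (Fin d) (Fin d) (MPoly d)) (hΦsym : Φ.IsSymm)
    (Ψ : Fin d → MPoly d)
    (hPearson : Pearson u Φ Ψ) :
    ∀ f : MPoly d, u (Lop Φ Ψ f) = 0 := by
  intro f
  have key : Lop Φ Ψ f = ∑ i, (∑ j, Φ i j * pderiv j (pderiv i f) + Ψ i * pderiv i f) := by
    rw [Finset.sum_add_distrib, Lop]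
    rw [add_left_inj]
    rw [Finset.sum_comm]
    refine Finset.sum_congr rfl fun i _ => Finset.sum_congr rfl fun j _ => ?_
    rw [← hΦsym.apply i j]
  rw [key, map_sum]
  exact Finset.sum_eq_zero fun i _ => hPearson (pderiv i f) i
end
end

section
/- Let u be a quasi-definite moment functional on real polynomials in d variables with a WOPS {ℙ_n}_{n≥0} normalized so that ∇ℙ_1^t = I_d, let Φ be a symmetric d×d polynomial matrix with deg Φ = p and det⟨u, Φ⟩ ≠ 0, let Ψ be a d×1 polynomial matrix with deg Ψ = q ≥ 1, set s = max{p−2, q−1}, and let L be the associated second-order operator. Assume that for every n ≥ 0 there exist constant real matrices Λ_i^n of size r_i×r_n, for max{1, n−s} ≤ i ≤ n+s, such that L[ℙ_n^t] = Σ_{i=max{1,n−s}}^{n+s} ℙ_i^t Λ_i^n. Then u satisfies a matrix Pearson equation div(Φ u) = (Ψ')^t u, where Ψ' = −Σ_{i=0}^{s+1} ⟨u, (∇ℙ_1^t)^t Φ ∇ℙ_i^t⟩ H_i^{−1} ℙ_i is a d×1 polynomial matrix of degree at most s+1. -/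
open MvPolynomial Matrix Finset MeasureTheory

noncomputable section

variable {d : ℕ} {u : MomF d} {P : (n : ℕ) → Fin (rdim d n) → MPoly d}

lemma apply_eq_zero_of_forall (hW : IsWOPS u P)
    (T : MPoly d →ₗ[ℝ] ℝ) (N : ℕ) (hT : ∀ n, n ≤ N → ∀ k, T (P n k) = 0)
    {f : MPoly d} (hf : f.totalDegree ≤ N) : T f = 0 := by
  have h2 := hW.span N ((MvPolynomial.mem_restrictTotalDegree (σ := Fin d) (m := N) f).mpr hf)
  have hle : Submodule.span ℝ {g | ∃ m ≤ N, ∃ k, P m k = g} ≤ LinearMap.ker T := by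
    rw [Submodule.span_le]
    rintro x ⟨m, hm, k, rfl⟩
    exact LinearMap.mem_ker.mpr (hT m hm k)
  exact LinearMap.mem_ker.mp (hle h2)

lemma u_mul_eq_zero (hW : IsWOPS u P) {n : ℕ} (m : Fin (rdim d n)) {g : MPoly d}
    (hg : g.totalDegree < n) : u (g * P n m) = 0 := by
  have := apply_eq_zero_of_forall hW (u ∘ₗ LinearMap.mulRight ℝ (P n m)) (n - 1)
    (fun n' hn' k => by simpa using hW.orth n' n (by omega) k m) (f := g) (by omega)
  simpa using this

def LopL {d : ℕ} (Φ : Matrix (Fin d) (Fin d) (MPoly d)) (Ψ : Fin d → MPoly d) :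
    MPoly d →ₗ[ℝ] MPoly d :=
  (∑ i, ∑ j, (LinearMap.mulLeft ℝ (Φ i j)).comp
      (((pderiv i : Derivation ℝ (MPoly d) (MPoly d)).toLinearMap).comp
        (pderiv j : Derivation ℝ (MPoly d) (MPoly d)).toLinearMap))
  + ∑ i, (LinearMap.mulLeft ℝ (Ψ i)).comp
      (pderiv i : Derivation ℝ (MPoly d) (MPoly d)).toLinearMap

lemma LopL_apply (Φ : Matrix (Fin d) (Fin d) (MPoly d)) (Ψ : Fin d → MPoly d)
    (f : MPoly d) : LopL Φ Ψ f = Lop Φ Ψ f := by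
  simp [LopL, Lop, LinearMap.sum_apply]

lemma u_P_eq_zero (hW : IsWOPS u P) {n : ℕ} (hn : 1 ≤ n) (k : Fin (rdim d n)) :
    u (P n k) = 0 := by
  have := u_mul_eq_zero hW k (g := 1) (by simp; omega)
  simpa using this

lemma Lop_X_mul {d : ℕ} (Φ : Matrix (Fin d) (Fin d) (MPoly d)) (hΦsym : Φ.IsSymm)
    (Ψ : Fin d → MPoly d) (a : Fin d) (f : MPoly d) :
    Lop Φ Ψ (X a * f) = X a * Lop Φ Ψ f + Ψ a * f + 2 * ∑ j, Φ a j * pderiv j f := by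
  have hX : ∀ (j : Fin d) (g : MPoly d), pderiv j (X a * g) =
      (if j = a then g else 0) + X a * pderiv j g := by
    intro j g
    rw [pderiv_mul]
    by_cases h : j = a
    · subst h; simp
    · simp [pderiv_X_of_ne (Ne.symm h), h]
  have e1 : ∀ i j : Fin d, Φ i j * pderiv i (pderiv j (X a * f)) =
      ((if j = a then Φ i j * pderiv i f else 0) + (if i = a then Φ i j * pderiv j f else 0))
        + Φ i j * (X a * pderiv i (pderiv j f)) := by
    intro i j
    rw [hX j f, map_add, hX i (pderiv j f)]
    by_cases h1 : j = a <;> by_cases h2 : i = a <;> simp [h1, h2] <;> ring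
  have e2 : ∀ i : Fin d, Ψ i * pderiv i (X a * f) =
      (if i = a then Ψ i * f else 0) + Ψ i * (X a * pderiv i f) := by
    intro i
    rw [hX i f]
    by_cases h : i = a <;> simp [h] <;> ring
  unfold Lop
  rw [Finset.sum_congr rfl fun i _ => Finset.sum_congr rfl fun j _ => e1 i j,
      Finset.sum_congr rfl fun i _ => e2 i]
  simp only [Finset.sum_add_distrib]
  have s1 : (∑ i : Fin d, ∑ j : Fin d, if j = a then Φ i j * pderiv i f else 0)
      = ∑ i : Fin d, Φ a i * pderiv i f := by
    refine Finset.sum_congr rfl fun i _ => ?_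
    rw [Finset.sum_ite_eq' Finset.univ a (fun j => Φ i j * pderiv i f)]
    simp [hΦsym.apply]
  have s2 : (∑ i : Fin d, ∑ j : Fin d, if i = a then Φ i j * pderiv j f else 0)
      = ∑ j : Fin d, Φ a j * pderiv j f := by
    have e : ∀ i : Fin d, (∑ j : Fin d, if i = a then Φ i j * pderiv j f else 0)
        = if i = a then ∑ j : Fin d, Φ i j * pderiv j f else 0 := by
      intro i; by_cases h : i = a <;> simp [h]
    rw [Finset.sum_congr rfl fun i _ => e i,
      Finset.sum_ite_eq' Finset.univ a (fun i => ∑ j : Fin d, Φ i j * pderiv j f)]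
    simp
  have s3 : (∑ i : Fin d, if i = a then Ψ i * f else 0) = Ψ a * f := by
    rw [Finset.sum_ite_eq' Finset.univ a (fun i => Ψ i * f)]; simp
  rw [s1, s2, s3]
  rw [show (∑ i : Fin d, ∑ j : Fin d, Φ i j * (X a * pderiv i (pderiv j f)))
      = X a * ∑ i : Fin d, ∑ j : Fin d, Φ i j * pderiv i (pderiv j f) by
    rw [Finset.mul_sum]; exact Finset.sum_congr rfl fun i _ => by rw [Finset.mul_sum]; exact Finset.sum_congr rfl fun j _ => by ring]
  rw [show (∑ i : Fin d, Ψ i * (X a * pderiv i f)) = X a * ∑ i : Fin d, Ψ i * pderiv i f by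
    rw [Finset.mul_sum]; exact Finset.sum_congr rfl fun i _ => by ring]
  ring

lemma uLop_zero (hW : IsWOPS u P) (Φ : Matrix (Fin d) (Fin d) (MPoly d))
    (Ψ : Fin d → MPoly d) (s : ℕ)
    (hdd : ∀ n : ℕ,
      ∃ Λ : (i : ℕ) → Matrix (Fin (rdim d i)) (Fin (rdim d n)) ℝ,
        ∀ k, Lop Φ Ψ (P n k) =
          ∑ i ∈ Finset.Icc (max 1 (n - s)) (n + s), ∑ a, P i a * MvPolynomial.C (Λ i a k))
    (f : MPoly d) : u (Lop Φ Ψ f) = 0 := by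
  have key : ∀ n (k : Fin (rdim d n)), u (Lop Φ Ψ (P n k)) = 0 := by
    intro n k
    obtain ⟨Λ, hΛ⟩ := hdd n
    rw [hΛ k, map_sum]
    refine Finset.sum_eq_zero fun i hi => ?_
    rw [map_sum]
    refine Finset.sum_eq_zero fun b _ => ?_
    have hi1 : 1 ≤ i := le_trans (le_max_left 1 (n - s)) (Finset.mem_Icc.mp hi).1
    have : P i b * MvPolynomial.C (Λ i b k) = (Λ i b k) • P i b := by
      rw [smul_eq_C_mul]; ring
    rw [this, _root_.map_smul, u_P_eq_zero hW hi1 b, smul_zero]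
  have := apply_eq_zero_of_forall hW (u ∘ₗ LopL Φ Ψ) f.totalDegree
    (fun n _ k => by simpa [LopL_apply] using key n k) (f := f) le_rfl
  simpa [LopL_apply] using this

lemma grad_term_zero (hW : IsWOPS u P) (Φ : Matrix (Fin d) (Fin d) (MPoly d))
    (hΦsym : Φ.IsSymm) (Ψ : Fin d → MPoly d) (s : ℕ)
    (hΨdeg : ∀ a : Fin d, (Ψ a).totalDegree ≤ s + 1)
    (hdd : ∀ n : ℕ,
      ∃ Λ : (i : ℕ) → Matrix (Fin (rdim d i)) (Fin (rdim d n)) ℝ,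
        ∀ k, Lop Φ Ψ (P n k) =
          ∑ i ∈ Finset.Icc (max 1 (n - s)) (n + s), ∑ a, P i a * MvPolynomial.C (Λ i a k))
    {n : ℕ} (hn : s + 2 ≤ n) (m : Fin (rdim d n)) (a : Fin d) :
    u (∑ j, Φ a j * pderiv j (P n m)) = 0 := by
  have h0 : u (Lop Φ Ψ (X a * P n m)) = 0 := uLop_zero hW Φ Ψ s hdd _
  rw [Lop_X_mul Φ hΦsym Ψ a (P n m), map_add, map_add] at h0
  have h1 : u (X a * Lop Φ Ψ (P n m)) = 0 := by
    obtain ⟨Λ, hΛ⟩ := hdd n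
    rw [hΛ m, Finset.mul_sum, map_sum]
    refine Finset.sum_eq_zero fun i hi => ?_
    rw [Finset.mul_sum, map_sum]
    refine Finset.sum_eq_zero fun b _ => ?_
    have hi2 : 2 ≤ i := by
      have := (Finset.mem_Icc.mp hi).1
      omega
    have e : X a * (P i b * MvPolynomial.C (Λ i b m)) = (Λ i b m) • (X a * P i b) := by
      rw [smul_eq_C_mul]; ring
    rw [e, _root_.map_smul, u_mul_eq_zero hW b (by simp; omega), smul_zero]
  have h2 : u (Ψ a * P n m) = 0 :=
    u_mul_eq_zero hW m (lt_of_le_of_lt (hΨdeg a) (by omega))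
  have h3 : u (2 * ∑ j, Φ a j * pderiv j (P n m))
      = 2 * u (∑ j, Φ a j * pderiv j (P n m)) := by
    have e : (2 : MPoly d) * ∑ j, Φ a j * pderiv j (P n m)
        = (2 : ℝ) • ∑ j, Φ a j * pderiv j (P n m) := by
      rw [smul_eq_C_mul, map_ofNat]
    rw [e, _root_.map_smul, smul_eq_mul]
  rw [h1, h2, h3] at h0
  linarith

lemma gradrow (hnorm : ∀ (i : Fin d) (k : Fin (rdim d 1)),
      pderiv i (P 1 k) = if (i : ℕ) = (k : ℕ) then 1 else 0)
    (Φ : Matrix (Fin d) (Fin d) (MPoly d)) (a : Fin d) (j : Fin d) :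
    ((gradT (P 1))ᵀ * Φ) (fin1cast d a) j = Φ a j := by
  rw [Matrix.mul_apply]
  have e : ∀ i : Fin d, (gradT (P 1))ᵀ (fin1cast d a) i * Φ i j
      = if i = a then Φ i j else 0 := by
    intro i
    have : (gradT (P 1))ᵀ (fin1cast d a) i = if i = a then 1 else 0 := by
      simp only [Matrix.transpose_apply, gradT, Matrix.of_apply, hnorm]
      have : ((fin1cast d a : Fin (rdim d 1)) : ℕ) = (a : ℕ) := rfl
      rw [this]
      by_cases h : i = a
      · simp [h]
      · simp [h, Fin.val_eq_val, h]
    rw [this]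
    by_cases h : i = a <;> simp [h]
  rw [Finset.sum_congr rfl fun i _ => e i,
    Finset.sum_ite_eq' Finset.univ a (fun i => Φ i j)]
  simp

lemma V_entry (hnorm : ∀ (i : Fin d) (k : Fin (rdim d 1)),
      pderiv i (P 1 k) = if (i : ℕ) = (k : ℕ) then 1 else 0)
    (Φ : Matrix (Fin d) (Fin d) (MPoly d)) (n : ℕ) (a : Fin d) (m : Fin (rdim d n)) :
    (mApply u ((gradT (P 1))ᵀ * Φ * gradT (P n))) (fin1cast d a) m
      = u (∑ j, Φ a j * pderiv j (P n m)) := by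
  simp only [mApply, Matrix.of_apply]
  congr 1
  rw [Matrix.mul_apply]
  exact Finset.sum_congr rfl fun j _ => by rw [gradrow hnorm Φ a j]; rfl

lemma u_psi_mul (hW : IsWOPS u P)
    (hnorm : ∀ (i : Fin d) (k : Fin (rdim d 1)),
      pderiv i (P 1 k) = if (i : ℕ) = (k : ℕ) then 1 else 0)
    (Φ : Matrix (Fin d) (Fin d) (MPoly d)) (s : ℕ) (n : ℕ) (m : Fin (rdim d n))
    (a : Fin d) :
    u (psiDef u P Φ s a * P n m)
      = if n ≤ s + 1 then -u (∑ j, Φ a j * pderiv j (P n m)) else 0 := by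
  have expand : u (psiDef u P Φ s a * P n m)
      = -∑ i ∈ Finset.range (s + 2), ∑ k,
          ((mApply u ((gradT (P 1))ᵀ * Φ * gradT (P i)) * (Hmat u P i)⁻¹)
            (fin1cast d a) k) * u (P i k * P n m) := by
    simp only [psiDef, neg_mul, Finset.sum_mul, map_neg, map_sum, neg_inj]
    refine Finset.sum_congr rfl fun i _ => Finset.sum_congr rfl fun k _ => ?_
    have e : MvPolynomial.C ((mApply u ((gradT (P 1))ᵀ * Φ * gradT (P i)) * (Hmat u P i)⁻¹)
          (fin1cast d a) k) * P i k * P n m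
        = ((mApply u ((gradT (P 1))ᵀ * Φ * gradT (P i)) * (Hmat u P i)⁻¹)
          (fin1cast d a) k) • (P i k * P n m) := by
      rw [smul_eq_C_mul]; ring
    rw [e, _root_.map_smul, smul_eq_mul]
  by_cases hn : n ≤ s + 1
  · rw [expand, if_pos hn]
    congr 1
    rw [Finset.sum_eq_single_of_mem n (Finset.mem_range.mpr (by omega))]
    · have : ∑ k, ((mApply u ((gradT (P 1))ᵀ * Φ * gradT (P n)) * (Hmat u P n)⁻¹)
            (fin1cast d a) k) * u (P n k * P n m)
          = ((mApply u ((gradT (P 1))ᵀ * Φ * gradT (P n)) * (Hmat u P n)⁻¹) * Hmat u P n)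
            (fin1cast d a) m := by
        rw [Matrix.mul_apply]; rfl
      rw [this, Matrix.mul_assoc,
        Matrix.nonsing_inv_mul (Hmat u P n) (show IsUnit (Hmat u P n).det from isUnit_iff_ne_zero.mpr (hW.Hdet n)), Matrix.mul_one,
        V_entry hnorm Φ n a m]
    · intro i _ hne
      exact Finset.sum_eq_zero fun k _ => by rw [hW.orth i n hne k m, mul_zero]
  · rw [expand, if_neg hn, neg_eq_zero]
    refine Finset.sum_eq_zero fun i hi => Finset.sum_eq_zero fun k _ => ?_
    have : i ≠ n := by have := Finset.mem_range.mp hi; omega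
    rw [hW.orth i n this k m, mul_zero]

/-- **Converse: differential–difference relation implies Pearson.**
Let `u` be quasi-definite with WOPS `{ℙ_n}` normalized so `∇ℙ_1ᵗ = I_d`, `Φ`
symmetric of degree `p` with `det⟨u,Φ⟩ ≠ 0`, `Ψ` of degree `q ≥ 1`,
`s = max{p−2, q−1}`, `L` the associated operator. If for every `n` there are
constant matrices `Λᵢⁿ`, `max{1, n−s} ≤ i ≤ n+s`, with
`L[ℙ_nᵗ] = Σ ℙ_iᵗ Λᵢⁿ`, then `u` satisfies `div(Φ u) = (Ψ')ᵗ u` where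
`Ψ' = −Σ_{i=0}^{s+1} ⟨u, (∇ℙ_1ᵗ)ᵗ Φ ∇ℙ_iᵗ⟩ H_i⁻¹ ℙ_i` has degree ≤ `s+1`. -/
theorem differential_difference_implies_pearson
    {d : ℕ} (u : MomF d) (P : (n : ℕ) → Fin (rdim d n) → MPoly d)
    (hW : IsWOPS u P)
    (hnorm : ∀ (i : Fin d) (k : Fin (rdim d 1)),
      pderiv i (P 1 k) = if (i : ℕ) = (k : ℕ) then 1 else 0)
    (Φ : Matrix (Fin d) (Fin d) (MPoly d)) (hΦsym : Φ.IsSymm)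
    (Ψ : Fin d → MPoly d)
    (p q : ℕ) (hp : matDeg Φ = p) (hq : vecDeg Ψ = q) (hq1 : 1 ≤ q)
    (hdet : (mApply u Φ).det ≠ 0)
    (s : ℕ) (hs : s = max (p - 2) (q - 1))
    (hdd : ∀ n : ℕ,
      ∃ Λ : (i : ℕ) → Matrix (Fin (rdim d i)) (Fin (rdim d n)) ℝ,
        ∀ k, Lop Φ Ψ (P n k) =
          ∑ i ∈ Finset.Icc (max 1 (n - s)) (n + s), ∑ a, P i a * MvPolynomial.C (Λ i a k)) :
    vecDeg (psiDef u P Φ s) ≤ s + 1 ∧ Pearson u Φ (psiDef u P Φ s) := by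
  have hΨdeg : ∀ a : Fin d, (Ψ a).totalDegree ≤ s + 1 := by
    intro a
    have h1 : (Ψ a).totalDegree ≤ q := by
      rw [← hq]; exact Finset.le_sup (f := fun i => (Ψ i).totalDegree) (Finset.mem_univ a)
    omega
  constructor
  · refine Finset.sup_le fun a _ => ?_
    show ((psiDef u P Φ s) a).totalDegree ≤ s + 1
    simp only [psiDef]
    rw [totalDegree_neg]
    refine totalDegree_finsetSum_le fun i hi => ?_
    refine totalDegree_finsetSum_le fun k _ => ?_
    refine le_trans (totalDegree_mul _ _) ?_
    rw [totalDegree_C, hW.deg i k]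
    have := Finset.mem_range.mp hi
    omega
  · intro f a
    set T : MPoly d →ₗ[ℝ] ℝ := u ∘ₗ
      ((∑ j, (LinearMap.mulLeft ℝ (Φ a j)).comp
          (pderiv j : Derivation ℝ (MPoly d) (MPoly d)).toLinearMap)
        + LinearMap.mulLeft ℝ (psiDef u P Φ s a)) with hT
    have hTapp : ∀ g, T g = u (∑ j, Φ a j * pderiv j g + psiDef u P Φ s a * g) := by
      intro g; simp [hT, LinearMap.sum_apply]
    have key : T f = 0 := by
      refine apply_eq_zero_of_forall hW T f.totalDegree (fun n _ m => ?_) le_rfl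
      rw [hTapp, map_add, u_psi_mul hW hnorm Φ s n m a]
      by_cases hn : n ≤ s + 1
      · rw [if_pos hn]; ring
      · rw [if_neg hn, grad_term_zero hW Φ hΦsym Ψ s hΨdeg hdd (by omega) m a, add_zero]
    rw [hTapp] at key
    exact key
end
end

section
/- Let u be a semiclassical moment functional on real polynomials in d variables, with data Φ symmetric d×d of degree p, Ψ of size d×1 with degree q ≥ 1, s = max{p−2, q−1}, let L be the associated second-order operator, and let {ℙ_n}_{n≥0} be a WOPS with respect to u. Then for every n there exist polynomial matrices N_1^n of size r_{n+1}×r_n with deg N_1^n ≤ s−1 and N_2^n of size r_n×r_n with deg N_2^n ≤ s such that L[ℙ_n^t] = ℙ_{n+1}^t N_1^n + ℙ_n^t N_2^n. -/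
open MvPolynomial Matrix Finset MeasureTheory

noncomputable section

/-! ### Auxiliary degree machinery -/

/-- degree-or-zero predicate with integer bound -/
def degOK {d : ℕ} (t : ℤ) (f : MPoly d) : Prop := f = 0 ∨ (f.totalDegree : ℤ) ≤ t

namespace degOK
variable {d : ℕ} {t t' : ℤ} {f g : MPoly d}

lemma zero : degOK t (0 : MPoly d) := Or.inl rfl

lemma of_le (h : (f.totalDegree : ℤ) ≤ t) : degOK t f := Or.inr h

lemma mono (h : degOK t f) (ht : t ≤ t') : degOK t' f := h.imp id fun h' => h'.trans ht

lemma add (hf : degOK t f) (hg : degOK t g) : degOK t (f + g) := by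
  rcases hf with rfl | hf
  · simpa using hg
  rcases hg with rfl | hg
  · rw [add_zero]; exact Or.inr hf
  refine Or.inr ?_
  calc ((f+g).totalDegree : ℤ) ≤ max f.totalDegree g.totalDegree := by
        exact_mod_cast Nat.cast_le.mpr (totalDegree_add f g)
    _ ≤ t := by simp only [Nat.cast_max, max_le_iff]; exact ⟨hf, hg⟩

lemma smul (c : ℝ) (hf : degOK t f) : degOK t (c • f) := by
  rcases hf with rfl | hf
  · simpa using zero
  exact Or.inr <| le_trans (by exact_mod_cast Nat.cast_le.mpr (totalDegree_smul_le c f)) hf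

lemma mul_left {e : ℕ} (hg : g.totalDegree ≤ e) (hf : degOK t f) : degOK (e + t) (g * f) := by
  rcases hf with rfl | hf
  · simpa using zero
  rcases eq_or_ne (g * f) 0 with h | h
  · exact Or.inl h
  refine Or.inr ?_
  calc ((g*f).totalDegree : ℤ) ≤ (g.totalDegree : ℤ) + f.totalDegree := by
        exact_mod_cast Nat.cast_le.mpr (totalDegree_mul g f)
    _ ≤ e + t := add_le_add (by exact_mod_cast hg) hf

lemma sum {ι : Type*} (s : Finset ι) (F : ι → MPoly d) (h : ∀ i ∈ s, degOK t (F i)) :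
    degOK t (∑ i ∈ s, F i) := by
  classical
  induction s using Finset.induction_on with
  | empty => simpa using zero
  | insert _ _ hx ih =>
      rw [Finset.sum_insert hx]
      exact (h _ (Finset.mem_insert_self _ _)).add (ih fun i hi => h i (Finset.mem_insert_of_mem hi))

lemma toNat {N : ℕ} (h : degOK (N : ℤ) f) : f.totalDegree ≤ N := by
  rcases h with rfl | h
  · simp
  · exact_mod_cast h

lemma pderiv (i : Fin d) (hf : degOK t f) : degOK (t - 1) (MvPolynomial.pderiv i f) := by
  classical
  rcases hf with rfl | hf
  · simpa using zero
  have hrw : MvPolynomial.pderiv i f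
      = ∑ α ∈ f.support, MvPolynomial.pderiv i (monomial α (coeff α f)) := by
    rw [← map_sum, support_sum_monomial_coeff]
  rw [hrw]
  refine degOK.sum _ _ fun α hα => ?_
  rw [pderiv_monomial]
  rcases Nat.eq_zero_or_pos (α i) with h0 | h1
  · exact Or.inl (by simp [h0])
  · refine Or.inr ?_
    have hle : Finsupp.single i 1 ≤ α := by
      rw [Finsupp.single_le_iff]; exact h1
    have hsum : (α - Finsupp.single i 1).sum (fun _ n => n) + 1 = α.sum (fun _ n => n) := by
      conv_rhs => rw [← tsub_add_cancel_of_le hle]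
      rw [Finsupp.sum_add_index' (fun _ => rfl) (fun _ _ _ => rfl), Finsupp.sum_single_index rfl]
    have h2 : ((monomial (α - Finsupp.single i 1)) (coeff α f * ↑(α i))).totalDegree
        ≤ (α - Finsupp.single i 1).sum fun _ n => n := totalDegree_monomial_le _ _
    have h3 : α.sum (fun _ n => n) ≤ f.totalDegree := le_totalDegree hα
    have h4 : ((monomial (α - Finsupp.single i 1)) (coeff α f * ↑(α i))).totalDegree + 1
        ≤ f.totalDegree := by omega
    omega

end degOK

lemma pderiv_comm' {d : ℕ} (i j : Fin d) (f : MPoly d) :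
    pderiv i (pderiv j f) = pderiv j (pderiv i f) := by
  induction f using MvPolynomial.induction_on' with
  | monomial α c =>
      simp only [pderiv_monomial]
      rcases eq_or_ne i j with rfl | hij
      · rfl
      · rw [Finsupp.tsub_apply, Finsupp.tsub_apply, Finsupp.single_apply, Finsupp.single_apply,
          if_neg hij, if_neg (Ne.symm hij), tsub_right_comm]
        push_cast [Nat.sub_zero]
        ring_nf
  | add f g hf hg => simp [hf, hg]

lemma totalDegree_X_mul {d : ℕ} (i : Fin d) {g : MPoly d} (hg : g ≠ 0) :
    (X i * g : MPoly d).totalDegree = g.totalDegree + 1 := by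
  classical
  refine le_antisymm ?_ ?_
  · simpa [totalDegree_X, add_comm] using totalDegree_mul (X i : MPoly d) g
  · obtain ⟨α, hα, hαd⟩ : ∃ α ∈ g.support, α.sum (fun _ n => n) = g.totalDegree := by
      obtain ⟨α, hα, h⟩ := Finset.exists_mem_eq_sup g.support
        (MvPolynomial.support_nonempty.mpr hg) (fun α => α.sum fun _ n => n)
      exact ⟨α, hα, h.symm⟩
    have hc : coeff (Finsupp.single i 1 + α) (X i * g) = coeff α g := coeff_X_mul α i g
    have hmem : Finsupp.single i 1 + α ∈ (X i * g).support := by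
      rw [MvPolynomial.mem_support_iff, hc]
      exact MvPolynomial.mem_support_iff.mp hα
    have := le_totalDegree hmem
    have hsum : (Finsupp.single i 1 + α).sum (fun _ n => n) = 1 + α.sum (fun _ n => n) := by
      rw [Finsupp.sum_add_index' (fun _ => rfl) (fun _ _ _ => rfl), Finsupp.sum_single_index rfl]
    omega

/-! ### Expansion and orthogonality lemmas -/

section WOPS
variable {d : ℕ} {u : MomF d} {P : (n : ℕ) → Fin (rdim d n) → MPoly d}

lemma IsWOPS.expand (hW : IsWOPS u P) {N : ℕ} {f : MPoly d} (hf : f.totalDegree ≤ N) :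
    ∃ c : (m : ℕ) → Fin (rdim d m) → ℝ,
      f = ∑ m ∈ Finset.range (N+1), ∑ k, c m k • P m k := by
  classical
  have hmem : f ∈ Submodule.span ℝ {g | ∃ m ≤ N, ∃ k, P m k = g} :=
    hW.span N ((mem_restrictTotalDegree _ _ f).mpr hf)
  have hset : {g | ∃ m ≤ N, ∃ k, P m k = g}
      = (fun p : (m : ℕ) × Fin (rdim d m) => P p.1 p.2) '' {p | p.1 ≤ N} := by
    ext g
    constructor
    · rintro ⟨m, hm, k, rfl⟩; exact ⟨⟨m, k⟩, hm, rfl⟩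
    · rintro ⟨⟨m, k⟩, hm, rfl⟩; exact ⟨m, hm, k, rfl⟩
  rw [hset] at hmem
  rw [Finsupp.mem_span_image_iff_linearCombination] at hmem
  obtain ⟨l, hl, hlf⟩ := hmem
  refine ⟨fun m k => l ⟨m, k⟩, ?_⟩
  have hsupp : l.support ⊆ (Finset.range (N+1)).sigma (fun m => (Finset.univ : Finset (Fin (rdim d m)))) := by
    intro p hp
    have hpN : p.1 ≤ N := hl hp
    simp [Finset.mem_sigma, Nat.lt_succ_iff, hpN]
  rw [← hlf, Finsupp.linearCombination_apply, Finsupp.sum]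
  rw [Finset.sum_subset hsupp (by intro p _ hp; simp [Finsupp.notMem_support_iff.mp hp])]
  rw [Finset.sum_sigma]

lemma IsWOPS.orth_low (hW : IsWOPS u P) {m : ℕ} {h : MPoly d} (hh : h.totalDegree < m)
    (j : Fin (rdim d m)) : u (P m j * h) = 0 := by
  obtain ⟨m', rfl⟩ : ∃ m', m = m' + 1 := ⟨m - 1, by omega⟩
  obtain ⟨c, rfl⟩ := hW.expand (Nat.lt_succ_iff.mp hh)
  rw [Finset.mul_sum, map_sum]
  refine Finset.sum_eq_zero fun m'' hm'' => ?_
  rw [Finset.mul_sum, map_sum]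
  refine Finset.sum_eq_zero fun k _ => ?_
  have hne : m' + 1 ≠ m'' := by
    have := Finset.mem_range.mp hm''; omega
  rw [mul_smul_comm, u.map_smul, hW.orth _ _ hne j k, smul_zero]

lemma IsWOPS.vecMul_H (hW : IsWOPS u P) {m : ℕ} {v : Fin (rdim d m) → ℝ}
    (h : ∀ j, ∑ k, v k * u (P m k * P m j) = 0) : v = 0 := by
  have hH : IsUnit (Hmat u P m) := by
    rw [Matrix.isUnit_iff_isUnit_det]
    exact IsUnit.mk0 _ (hW.Hdet m)
  have h0 : Matrix.vecMul v (Hmat u P m) = 0 := funext fun j => h j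
  have hd' : (Hmat u P m).det ≠ 0 := hW.Hdet m
  have h1 := congrArg (fun w => Matrix.vecMul w (Hmat u P m)⁻¹) h0
  simp only [Matrix.vecMul_vecMul, Matrix.zero_vecMul] at h1
  rwa [Matrix.mul_nonsing_inv _ (IsUnit.mk0 _ hd'), Matrix.vecMul_one] at h1

lemma IsWOPS.comb_deg (hW : IsWOPS u P) {m : ℕ} {v : Fin (rdim d m) → ℝ}
    (h : (∑ k, v k • P m k).totalDegree < m) : v = 0 := by
  refine hW.vecMul_H (fun j => ?_)
  have := hW.orth_low h j
  rw [Finset.mul_sum, map_sum] at this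
  rw [← this]
  refine Finset.sum_congr rfl fun k _ => ?_
  rw [mul_smul_comm, u.map_smul, smul_eq_mul, mul_comm (P m j) (P m k)]

lemma IsWOPS.coeff_eq_zero (hW : IsWOPS u P) {N m : ℕ} (hm : m ≤ N)
    {c : (m : ℕ) → Fin (rdim d m) → ℝ}
    (h : ∀ j, u ((∑ m' ∈ Finset.range (N+1), ∑ k, c m' k • P m' k) * P m j) = 0) :
    ∀ k, c m k = 0 := by
  have key : ∀ j, ∑ k, c m k * u (P m k * P m j) = 0 := by
    intro j
    have h2 := h j
    rw [Finset.sum_mul, map_sum] at h2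
    rw [Finset.sum_eq_single_of_mem m (Finset.mem_range.mpr (Nat.lt_succ_of_le hm))] at h2
    · rw [← h2]
      rw [Finset.sum_mul, map_sum]
      refine Finset.sum_congr rfl fun k _ => ?_
      rw [smul_mul_assoc, u.map_smul, smul_eq_mul]
    · intro m' _ hm'
      rw [Finset.sum_mul, map_sum]
      refine Finset.sum_eq_zero fun k _ => ?_
      rw [smul_mul_assoc, u.map_smul, hW.orth m' m hm' k j, smul_zero]
  have := hW.vecMul_H key
  exact fun k => congrFun this k
end WOPS

/-! ### Symmetry of the operator L and its degree bound -/

section Lsec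
variable {d : ℕ} {u : MomF d} {Φ : Matrix (Fin d) (Fin d) (MPoly d)} {Ψ : Fin d → MPoly d}

lemma Lop_pair (hP : Pearson u Φ Ψ) (f g : MPoly d) :
    u (f * Lop Φ Ψ g) + u (∑ i, ∑ j, Φ i j * (pderiv j f * pderiv i g)) = 0 := by
  have hsum : u (∑ i, (∑ j, Φ i j * pderiv j (f * pderiv i g) + Ψ i * (f * pderiv i g))) = 0 := by
    rw [map_sum]
    exact Finset.sum_eq_zero fun i _ => hP (f * pderiv i g) i
  rw [← hsum, ← map_add]
  congr 1
  unfold Lop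
  have e1 : f * (∑ i, ∑ j, Φ i j * pderiv i (pderiv j g))
      = ∑ i, ∑ j, Φ i j * (f * pderiv j (pderiv i g)) := by
    rw [Finset.mul_sum]
    refine Finset.sum_congr rfl fun i _ => ?_
    rw [Finset.mul_sum]
    refine Finset.sum_congr rfl fun j _ => ?_
    rw [pderiv_comm' i j]
    ring
  have e2 : f * (∑ i, Ψ i * pderiv i g) = ∑ i, Ψ i * (f * pderiv i g) := by
    rw [Finset.mul_sum]
    exact Finset.sum_congr rfl fun i _ => by ring
  rw [mul_add, e1, e2]
  simp only [pderiv_mul, mul_add, Finset.sum_add_distrib]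
  abel

lemma Lop_symm (hΦ : Φ.IsSymm) (hP : Pearson u Φ Ψ) (f g : MPoly d) :
    u (f * Lop Φ Ψ g) = u (g * Lop Φ Ψ f) := by
  have h1 := Lop_pair hP f g
  have h2 := Lop_pair hP g f
  have e : (∑ i, ∑ j, Φ i j * (pderiv j f * pderiv i g))
      = ∑ i, ∑ j, Φ i j * (pderiv j g * pderiv i f) := by
    rw [Finset.sum_comm]
    refine Finset.sum_congr rfl fun i _ => Finset.sum_congr rfl fun j _ => ?_
    rw [hΦ.apply i j]
    ring
  rw [e] at h1
  linarith

lemma degOK_Lop {s : ℕ} (hΦ : ∀ i j, (Φ i j).totalDegree ≤ s + 2)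
    (hΨ : ∀ i, (Ψ i).totalDegree ≤ s + 1)
    {f : MPoly d} {t : ℕ} (hf : f.totalDegree ≤ t) : degOK ((t : ℤ) + s) (Lop Φ Ψ f) := by
  unfold Lop
  have h1 : degOK ((t:ℤ)) f := degOK.of_le (by exact_mod_cast hf)
  refine degOK.add (degOK.sum _ _ fun i _ => degOK.sum _ _ fun j _ => ?_)
    (degOK.sum _ _ fun i _ => ?_)
  · have h2 := (h1.pderiv j).pderiv i
    exact (degOK.mul_left (hΦ i j) h2).mono (by push_cast; omega)
  · exact (degOK.mul_left (hΨ i) (h1.pderiv i)).mono (by push_cast; omega)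

end Lsec

/-! ### Representations in terms of `P (n+1)` and `P n` with polynomial coefficients -/

def RepM {d : ℕ} (P : (n : ℕ) → Fin (rdim d n) → MPoly d) (n : ℕ) (t₁ t₂ : ℤ)
    (f : MPoly d) : Prop :=
  ∃ A : Fin (rdim d (n+1)) → MPoly d, ∃ B : Fin (rdim d n) → MPoly d,
    (∀ a, degOK t₁ (A a)) ∧ (∀ a, degOK t₂ (B a)) ∧
    f = (∑ a, P (n+1) a * A a) + ∑ a, P n a * B a

namespace RepM
variable {d : ℕ} {P : (n : ℕ) → Fin (rdim d n) → MPoly d} {n : ℕ} {t₁ t₂ t₁' t₂' : ℤ}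
  {f g : MPoly d}

lemma zero : RepM P n t₁ t₂ (0 : MPoly d) :=
  ⟨0, 0, fun _ => degOK.zero, fun _ => degOK.zero, by simp⟩

lemma mono (h : RepM P n t₁ t₂ f) (h₁ : t₁ ≤ t₁') (h₂ : t₂ ≤ t₂') : RepM P n t₁' t₂' f := by
  obtain ⟨A, B, hA, hB, rfl⟩ := h
  exact ⟨A, B, fun a => (hA a).mono h₁, fun a => (hB a).mono h₂, rfl⟩

lemma add (hf : RepM P n t₁ t₂ f) (hg : RepM P n t₁ t₂ g) : RepM P n t₁ t₂ (f + g) := by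
  obtain ⟨A, B, hA, hB, rfl⟩ := hf
  obtain ⟨A', B', hA', hB', rfl⟩ := hg
  refine ⟨A + A', B + B', fun a => (hA a).add (hA' a), fun a => (hB a).add (hB' a), ?_⟩
  simp only [Pi.add_apply, mul_add, Finset.sum_add_distrib]
  ring

lemma smul (c : ℝ) (hf : RepM P n t₁ t₂ f) : RepM P n t₁ t₂ (c • f) := by
  obtain ⟨A, B, hA, hB, rfl⟩ := hf
  refine ⟨c • A, c • B, fun a => (hA a).smul c, fun a => (hB a).smul c, ?_⟩
  simp only [Pi.smul_apply, smul_add, Finset.smul_sum, mul_smul_comm]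

lemma sub (hf : RepM P n t₁ t₂ f) (hg : RepM P n t₁ t₂ g) : RepM P n t₁ t₂ (f - g) := by
  have h := hf.add (hg.smul (-1 : ℝ))
  rwa [neg_one_smul, ← sub_eq_add_neg] at h

lemma sum {ι : Type*} (s : Finset ι) (F : ι → MPoly d) (h : ∀ i ∈ s, RepM P n t₁ t₂ (F i)) :
    RepM P n t₁ t₂ (∑ i ∈ s, F i) := by
  classical
  induction s using Finset.induction_on with
  | empty => simpa using zero
  | insert _ _ hx ih =>
      rw [Finset.sum_insert hx]
      exact (h _ (Finset.mem_insert_self _ _)).add (ih fun i hi => h i (Finset.mem_insert_of_mem hi))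

lemma X_mul (i : Fin d) (hf : RepM P n t₁ t₂ f) : RepM P n (t₁+1) (t₂+1) (X i * f) := by
  obtain ⟨A, B, hA, hB, rfl⟩ := hf
  refine ⟨fun a => X i * A a, fun a => X i * B a, ?_, ?_, ?_⟩
  · intro a
    have := degOK.mul_left (g := (X i : MPoly d)) (e := 1) (le_of_eq (totalDegree_X i)) (hA a)
    exact this.mono (by push_cast; omega)
  · intro a
    have := degOK.mul_left (g := (X i : MPoly d)) (e := 1) (le_of_eq (totalDegree_X i)) (hB a)
    exact this.mono (by push_cast; omega)
  · simp only [mul_add, Finset.mul_sum]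
    congr 1 <;> exact Finset.sum_congr rfl fun a _ => by ring

lemma self (hk : (0:ℤ) ≤ t₂) (j : Fin (rdim d n)) : RepM P n t₁ t₂ (P n j) := by
  classical
  refine ⟨0, fun a => if a = j then 1 else 0, fun _ => degOK.zero, ?_, ?_⟩
  · intro a
    rcases eq_or_ne a j with rfl | h
    · simp only [if_pos rfl]
      exact Or.inr (by simpa using hk)
    · simp only [if_neg h]
      exact degOK.zero
  · simp [Finset.mul_sum, mul_ite]

lemma succ (hk : (0:ℤ) ≤ t₁) (j : Fin (rdim d (n+1))) : RepM P n t₁ t₂ (P (n+1) j) := by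
  classical
  refine ⟨fun a => if a = j then 1 else 0, 0, ?_, fun _ => degOK.zero, ?_⟩
  · intro a
    rcases eq_or_ne a j with rfl | h
    · simp only [if_pos rfl]
      exact Or.inr (by simpa using hk)
    · simp only [if_neg h]
      exact degOK.zero
  · simp [mul_ite]

end RepM

/-! ### The high-degree part representation -/

section RepEsec
variable {d : ℕ} {u : MomF d} {P : (n : ℕ) → Fin (rdim d n) → MPoly d}

lemma Finsupp_sum_sub_single {α : Fin d →₀ ℕ} {i : Fin d} (h : Finsupp.single i 1 ≤ α) :
    (α - Finsupp.single i 1).sum (fun _ e => e) + 1 = α.sum (fun _ e => e) := by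
  conv_rhs => rw [← tsub_add_cancel_of_le h]
  rw [Finsupp.sum_add_index' (fun _ => rfl) (fun _ _ _ => rfl), Finsupp.sum_single_index rfl]

lemma IsWOPS.expansion_deg (hW : IsWOPS u P) (N : ℕ) (c : (m : ℕ) → Fin (rdim d m) → ℝ) :
    (∑ m ∈ Finset.range (N+1), ∑ k, c m k • P m k).totalDegree ≤ N := by
  refine (totalDegree_finset_sum _ _).trans (Finset.sup_le fun m hm => ?_)
  refine (totalDegree_finset_sum _ _).trans (Finset.sup_le fun k _ => ?_)
  refine (totalDegree_smul_le _ _).trans ?_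
  rw [hW.deg m k]
  exact Nat.lt_succ_iff.mp (Finset.mem_range.mp hm)

lemma IsWOPS.repE (hW : IsWOPS u P) (n : ℕ) :
    ∀ M : ℕ, ∀ f : MPoly d, f.totalDegree ≤ M →
    ∃ A : Fin (rdim d (n+1)) → MPoly d, ∃ g : MPoly d,
      (∀ a, degOK ((M:ℤ) - (n+1)) (A a)) ∧ g.totalDegree ≤ n ∧
      f = (∑ a, P (n+1) a * A a) + g := by
  intro M
  induction M with
  | zero =>
      intro f hf
      exact ⟨0, f, fun _ => degOK.zero, hf.trans (Nat.zero_le n), by simp⟩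
  | succ M ih =>
    intro f hf
    by_cases hMn : M + 1 ≤ n
    · exact ⟨0, f, fun _ => degOK.zero, hf.trans hMn, by simp⟩
    have hnM : n ≤ M := by omega
    have key : ∀ α ∈ f.support, ∃ A : Fin (rdim d (n+1)) → MPoly d, ∃ g : MPoly d,
        (∀ a, degOK (((M+1:ℕ):ℤ) - (n+1)) (A a)) ∧ g.totalDegree ≤ n ∧
        (monomial α (coeff α f) : MPoly d) = (∑ a, P (n+1) a * A a) + g := by
      intro α hα
      by_cases hsmall : α.sum (fun _ e => e) ≤ n
      · exact ⟨0, monomial α (coeff α f), fun _ => degOK.zero,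
          (totalDegree_monomial_le _ _).trans hsmall, by simp⟩
      have hα0 : α ≠ 0 := by
        intro h0
        rw [h0] at hsmall
        exact hsmall (by simp)
      obtain ⟨i, hi⟩ := Finsupp.support_nonempty_iff.mpr hα0
      have hile : Finsupp.single i 1 ≤ α := by
        rw [Finsupp.single_le_iff]
        exact Nat.one_le_iff_ne_zero.mpr (Finsupp.mem_support_iff.mp hi)
      have hdec : (X i : MPoly d) * monomial (α - Finsupp.single i 1) (coeff α f)
          = monomial α (coeff α f) := by
        have hadd : Finsupp.single i 1 + (α - Finsupp.single i 1) = α := by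
          rw [add_comm]
          exact tsub_add_cancel_of_le hile
        rw [X, monomial_mul, one_mul, hadd]
      have hαs : α.sum (fun _ e => e) ≤ M + 1 := le_trans (le_totalDegree hα) hf
      have hsub : ((monomial (α - Finsupp.single i 1) (coeff α f)) : MPoly d).totalDegree ≤ M := by
        refine (totalDegree_monomial_le _ _).trans ?_
        have h1 := Finsupp_sum_sub_single hile
        have h2 : ((α - Finsupp.single i 1).sum fun _ => id) = ((α - Finsupp.single i 1).sum fun _ e => e) := rfl
        omega
      obtain ⟨A', g', hA', hg', hrep⟩ := ih _ hsub
      have hXg : ((X i : MPoly d) * g').totalDegree ≤ n + 1 := by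
        refine (totalDegree_mul _ _).trans ?_
        rw [totalDegree_X]
        omega
      obtain ⟨c', hc'⟩ := hW.expand hXg
      rw [Finset.sum_range_succ] at hc'
      refine ⟨fun a => X i * A' a + C (c' (n+1) a),
        ∑ m ∈ Finset.range (n+1), ∑ k, c' m k • P m k, ?_, hW.expansion_deg n c', ?_⟩
      · intro a
        refine degOK.add ?_ ?_
        · exact ((degOK.mul_left (le_of_eq (totalDegree_X i)) (hA' a))).mono (by push_cast; omega)
        · refine (degOK.of_le (t := 0) (by simp [totalDegree_C])).mono (by push_cast; omega)
      · rw [← hdec, hrep, mul_add, Finset.mul_sum]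
        have e1 : ∑ a, (X i : MPoly d) * (P (n+1) a * A' a) = ∑ a, P (n+1) a * (X i * A' a) :=
          Finset.sum_congr rfl fun a _ => by ring
        have e2 : ∑ k, c' (n+1) k • P (n+1) k = ∑ a, P (n+1) a * C (c' (n+1) a) :=
          Finset.sum_congr rfl fun a _ => by rw [smul_eq_C_mul]; ring
        rw [e1, hc', e2]
        simp only [mul_add, Finset.sum_add_distrib]
        ring
    choose A g hA hg hrep using key
    refine ⟨fun a => ∑ α ∈ f.support.attach, A α.1 α.2 a,
      ∑ α ∈ f.support.attach, g α.1 α.2, ?_, ?_, ?_⟩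
    · intro a
      exact degOK.sum _ _ fun α _ => hA α.1 α.2 a
    · refine (totalDegree_finset_sum _ _).trans (Finset.sup_le fun α _ => hg α.1 α.2)
    · conv_lhs => rw [← support_sum_monomial_coeff f, ← Finset.sum_attach f.support
        (fun α => monomial α (coeff α f))]
      rw [Finset.sum_congr rfl fun α _ => hrep α.1 α.2]
      rw [Finset.sum_add_distrib]
      congr 1
      rw [Finset.sum_comm]
      exact Finset.sum_congr rfl fun a _ => by rw [Finset.mul_sum]

end RepEsec

/-! ### Key lemma: low-degree `P m` are representable via `P (n+1)`, `P n` -/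

section RepKsec
variable {d : ℕ} {u : MomF d} {P : (n : ℕ) → Fin (rdim d n) → MPoly d}

lemma IsWOPS.pair_single (hW : IsWOPS u P) {m : ℕ} (w : Fin (rdim d m) → ℝ) (h : MPoly d) :
    u (h * ∑ k, w k • P m k) = ∑ k, w k * u (h * P m k) := by
  rw [Finset.mul_sum, map_sum]
  exact Finset.sum_congr rfl fun k _ => by rw [mul_smul_comm, u.map_smul, smul_eq_mul]

lemma IsWOPS.pair_expansion (hW : IsWOPS u P) {N m : ℕ} (hm : m ≤ N)
    (c : (l : ℕ) → Fin (rdim d l) → ℝ) (w : Fin (rdim d m) → ℝ) :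
    u ((∑ l ∈ Finset.range (N+1), ∑ b, c l b • P l b) * (∑ k, w k • P m k))
      = ∑ b, c m b * ∑ k, w k * u (P m b * P m k) := by
  rw [Finset.sum_mul, map_sum,
    Finset.sum_eq_single_of_mem m (Finset.mem_range.mpr (Nat.lt_succ_of_le hm))]
  · rw [Finset.sum_mul, map_sum]
    refine Finset.sum_congr rfl fun b _ => ?_
    rw [smul_mul_assoc, u.map_smul, smul_eq_mul]
    congr 1
    exact hW.pair_single w (P m b)
  · intro l _ hne
    rw [Finset.sum_mul, map_sum]
    refine Finset.sum_eq_zero fun b _ => ?_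
    rw [smul_mul_assoc, u.map_smul, hW.pair_single w (P l b)]
    rw [Finset.sum_eq_zero fun k _ => by rw [hW.orth l m hne b k, mul_zero], smul_zero]

lemma IsWOPS.repK (hW : IsWOPS u P) (hd : 0 < d) (n : ℕ) :
    ∀ t m (j : Fin (rdim d m)), m + t = n → RepM P n ((t:ℤ) - 1) (t:ℤ) (P m j) := by
  intro t
  induction t using Nat.strong_induction_on with
  | _ t ih =>
    rcases t with _ | t
    · intro m j hmt
      obtain rfl : m = n := by omega
      exact RepM.self (by norm_num) j
    intro m j hmt
    have hm1 : (m + 1) + t = n := by omega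
    -- expansions of X i * P (m+1) a
    have hexp : ∀ z : Fin d × Fin (rdim d (m+1)), ∃ c : (l : ℕ) → Fin (rdim d l) → ℝ,
        X z.1 * P (m+1) z.2 = ∑ l ∈ Finset.range (m+2+1), ∑ b, c l b • P l b := by
      intro z
      refine hW.expand ?_
      refine (totalDegree_mul _ _).trans ?_
      rw [totalDegree_X, hW.deg]
      omega
    choose c hc using hexp
    -- low coefficients vanish
    have hlow : ∀ z, ∀ l, l < m → ∀ b, c z l b = 0 := by
      intro z l hl
      refine hW.coeff_eq_zero (N := m+2) (m := l) (by omega) (fun j' => ?_)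
      rw [← hc z]
      have hre : (X z.1 * P (m+1) z.2) * P l j' = P (m+1) z.2 * (X z.1 * P l j') := by ring
      rw [hre]
      refine hW.orth_low ?_ z.2
      refine lt_of_le_of_lt ((totalDegree_mul _ _).trans ?_) (show 1 + l < m + 1 by omega)
      rw [totalDegree_X, hW.deg]
    -- split form
    have hsplit : ∀ z, X z.1 * P (m+1) z.2
        = (∑ b, c z (m+2) b • P (m+2) b) + (∑ b, c z (m+1) b • P (m+1) b)
          + ∑ b, c z m b • P m b := by
      intro z
      rw [hc z, Finset.sum_range_succ, Finset.sum_range_succ, Finset.sum_range_succ,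
        Finset.sum_eq_zero fun l hl => Finset.sum_eq_zero fun b _ => by
          rw [hlow z l (Finset.mem_range.mp hl) b, zero_smul]]
      abel
    -- the matrix C and its injectivity
    set Cmat : Matrix (Fin d × Fin (rdim d (m+1))) (Fin (rdim d m)) ℝ :=
      fun z b => c z m b with hCmat
    have hker : ∀ v, Cmat.mulVecLin v = 0 → v = 0 := by
      intro v hv
      set w : Fin (rdim d m) → ℝ := (Hmat u P m)⁻¹ *ᵥ v with hwdef
      have hvw : Hmat u P m *ᵥ w = v := by
        rw [hwdef, Matrix.mulVec_mulVec,
          Matrix.mul_nonsing_inv _ (IsUnit.mk0 _ (show (Hmat u P m).det ≠ 0 from hW.Hdet m)),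
          Matrix.one_mulVec]
      set g : MPoly d := ∑ k, w k • P m k with hgdef
      have hg1 : ∀ z : Fin d × Fin (rdim d (m+1)), u ((X z.1 * P (m+1) z.2) * g) = 0 := by
        intro z
        rw [hc z, hgdef, hW.pair_expansion (by omega) (c z) w]
        have hin : ∀ b, (∑ k, w k * u (P m b * P m k)) = v b := by
          intro b
          rw [← congrFun hvw b]
          simp only [Hmat, Matrix.mulVec, dotProduct, Matrix.of_apply]
          exact Finset.sum_congr rfl fun k _ => by ring
        rw [Finset.sum_congr rfl fun b _ => by rw [hin b]]
        calc ∑ b, c z m b * v b = Cmat.mulVecLin v z := by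
              simp only [Matrix.mulVecLin_apply, Matrix.mulVec, dotProduct, hCmat]; rfl
          _ = 0 := by rw [hv]; simp
      -- if v ≠ 0 we derive a contradiction
      by_contra hvne
      have hwne : w ≠ 0 := by
        intro h0
        rw [h0, Matrix.mulVec_zero] at hvw
        exact hvne hvw.symm
      have hgne : g ≠ 0 := by
        intro h0
        refine hwne (hW.vecMul_H (v := w) fun j' => ?_)
        have : u (g * P m j') = 0 := by rw [h0, zero_mul, map_zero]
        rw [hgdef, Finset.sum_mul, map_sum] at this
        rw [← this]
        exact Finset.sum_congr rfl fun k _ => by rw [smul_mul_assoc, u.map_smul, smul_eq_mul]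
      have hgle : g.totalDegree ≤ m := by
        rw [hgdef]
        refine (totalDegree_finset_sum _ _).trans (Finset.sup_le fun k _ => ?_)
        exact (totalDegree_smul_le _ _).trans (le_of_eq (hW.deg m k))
      have hgm : g.totalDegree = m := by
        rcases lt_or_eq_of_le hgle with hlt | he
        · exact absurd (hW.comb_deg (hgdef ▸ hlt)) hwne
        · exact he
      -- expansion of X i * g
      have hXg : ∀ i : Fin d, ∃ e : (l : ℕ) → Fin (rdim d l) → ℝ,
          X i * g = ∑ l ∈ Finset.range (m+1+1), ∑ b, e l b • P l b := by
        intro i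
        refine hW.expand ((totalDegree_mul _ _).trans ?_)
        rw [totalDegree_X]
        omega
      choose e he using hXg
      have hext : ∀ i (b : Fin (rdim d (m+1))), e i (m+1) b = 0 := by
        intro i
        refine hW.coeff_eq_zero (N := m+1) (m := m+1) (le_refl (m+1)) (fun j' => ?_)
        rw [← he i]
        have hre : (X i * g) * P (m+1) j' = (X i * P (m+1) j') * g := by ring
        rw [hre]
        exact hg1 ⟨i, j'⟩
      have hdegXg : ∀ i : Fin d, (X i * g).totalDegree ≤ m := by
        intro i
        have htop : (∑ b, e i (m+1) b • P (m+1) b) = 0 :=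
          Finset.sum_eq_zero fun b _ => by rw [hext i b, zero_smul]
        rw [he i, Finset.sum_range_succ, htop, add_zero]
        exact hW.expansion_deg m (e i)
      have hxx := totalDegree_X_mul (⟨0, hd⟩ : Fin d) hgne
      have hyy := hdegXg (⟨0, hd⟩ : Fin d)
      omega
    have hinj : LinearMap.ker Cmat.mulVecLin = ⊥ := by
      rw [LinearMap.ker_eq_bot]
      intro x y hxy
      have := hker (x - y) (by rw [map_sub, hxy, sub_self])
      exact sub_eq_zero.mp this
    obtain ⟨D, hD⟩ := LinearMap.exists_leftInverse_of_injective _ hinj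
    set Dm : Fin (rdim d m) → (Fin d × Fin (rdim d (m+1))) → ℝ :=
      fun b' z => D (fun y => if z = y then 1 else 0) b' with hDm
    have hDC : ∀ b : Fin (rdim d m), ∀ b', (∑ z, Dm b' z * Cmat z b) = if b' = b then 1 else 0 := by
      intro b b'
      have h1 : D (Cmat.mulVecLin (fun k => if b = k then 1 else 0)) = (fun k => if b = k then 1 else 0) := by
        have h0 := congrArg (fun (F : _ →ₗ[ℝ] _) => F (fun k => if b = k then (1:ℝ) else 0)) hD
        simpa using h0
      have h2 : Cmat.mulVecLin (fun k => if b = k then (1:ℝ) else 0) = fun z => Cmat z b := by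
        funext z
        simp [Matrix.mulVecLin_apply, Matrix.mulVec, dotProduct, mul_ite, mul_one, mul_zero]
      rw [h2] at h1
      have h3 := LinearMap.pi_apply_eq_sum_univ D (fun z => Cmat z b)
      calc (∑ z, Dm b' z * Cmat z b)
          = (∑ z, Cmat z b • D fun y => if z = y then 1 else 0) b' := by
            rw [Finset.sum_apply]
            refine Finset.sum_congr rfl fun z _ => ?_
            simp only [Pi.smul_apply, smul_eq_mul, hDm]
            ring
        _ = D (fun z => Cmat z b) b' := (congrFun h3 b').symm
        _ = if b = b' then 1 else 0 := congrFun h1 b'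
        _ = if b' = b then 1 else 0 := by simp [eq_comm]
    -- final identity
    have hfinal : P m j = ∑ z : Fin d × Fin (rdim d (m+1)), Dm j z •
        ((X z.1 * P (m+1) z.2) - (∑ b, c z (m+2) b • P (m+2) b)
          - ∑ b, c z (m+1) b • P (m+1) b) := by
      have hS0 : ∀ z, (X z.1 * P (m+1) z.2) - (∑ b, c z (m+2) b • P (m+2) b)
          - (∑ b, c z (m+1) b • P (m+1) b) = ∑ b, c z m b • P m b := by
        intro z
        rw [hsplit z]
        ring
      rw [Finset.sum_congr rfl fun z _ => by rw [hS0 z]]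
      rw [Finset.sum_congr rfl fun z _ => Finset.smul_sum]
      rw [Finset.sum_comm]
      have hrw : ∀ b, (∑ z, Dm j z • c z m b • P m b) = (if j = b then (1:ℝ) else 0) • P m b := by
        intro b
        rw [← hDC b j]
        rw [Finset.sum_smul]
        exact Finset.sum_congr rfl fun z _ => by rw [smul_smul, hCmat]
      rw [Finset.sum_congr rfl fun b _ => hrw b]
      simp [ite_smul]
    -- assemble RepM
    rw [hfinal]
    refine RepM.sum _ _ fun z _ => RepM.smul _ (RepM.sub (RepM.sub ?_ ?_) ?_)
    · have h1 := ih t (Nat.lt_succ_self t) (m+1) z.2 hm1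
      have h2 := h1.X_mul z.1
      exact h2.mono (by push_cast; omega) (by push_cast; omega)
    · refine RepM.sum _ _ fun b _ => RepM.smul _ ?_
      rcases Nat.eq_zero_or_pos t with rfl | ht
      · obtain rfl : n = m + 1 := by omega
        exact RepM.succ (by norm_num) b
      · have h1 := ih (t-1) (by omega) (m+2) b (by omega)
        exact h1.mono (by push_cast; omega) (by push_cast; omega)
    · refine RepM.sum _ _ fun b _ => RepM.smul _ ?_
      exact (ih t (Nat.lt_succ_self t) (m+1) b hm1).mono (by push_cast; omega) (by push_cast; omega)

end RepKsec

/-! ### Main theorem -/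

/-- **Short differential–difference relation.**
If `u` is semiclassical with data `Φ` (symmetric, degree `p`), `Ψ` (degree
`q ≥ 1`), `s = max{p−2, q−1}`, and `{ℙ_n}` a WOPS for `u`, then for every `n`
there are polynomial matrices `N₁ⁿ` (degree ≤ `s−1`, where zero entries are
allowed regardless) and `N₂ⁿ` (degree ≤ `s`) with
`L[ℙ_nᵗ] = ℙ_{n+1}ᵗ N₁ⁿ + ℙ_nᵗ N₂ⁿ`. -/
theorem short_differential_difference_relation
    {d : ℕ} (u : MomF d) (P : (n : ℕ) → Fin (rdim d n) → MPoly d)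
    (hW : IsWOPS u P)
    (Φ : Matrix (Fin d) (Fin d) (MPoly d)) (hΦsym : Φ.IsSymm)
    (Ψ : Fin d → MPoly d)
    (p q : ℕ) (hp : matDeg Φ = p) (hq : vecDeg Ψ = q) (hq1 : 1 ≤ q)
    (hPearson : Pearson u Φ Ψ)
    (hdet : (mApply u Φ).det ≠ 0)
    (s : ℕ) (hs : s = max (p - 2) (q - 1)) :
    ∀ n : ℕ,
      ∃ N₁ : Matrix (Fin (rdim d (n + 1))) (Fin (rdim d n)) (MPoly d),
      ∃ N₂ : Matrix (Fin (rdim d n)) (Fin (rdim d n)) (MPoly d),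
        (∀ a k, N₁ a k = 0 ∨ ((N₁ a k).totalDegree : ℤ) ≤ (s : ℤ) - 1) ∧
        matDeg N₂ ≤ s ∧
        ∀ k, Lop Φ Ψ (P n k) =
          (∑ a, P (n + 1) a * N₁ a k) + ∑ a, P n a * N₂ a k := by
  intro n
  -- positivity of the dimension
  have hd : 0 < d := by
    by_contra hd0
    have hd' : d = 0 := by omega
    subst hd'
    have hv : vecDeg Ψ = 0 := by
      rw [vecDeg]
      simp
    omega
  -- degree bounds from `s`
  have h1 := le_max_left (p - 2) (q - 1)
  have h2 := le_max_right (p - 2) (q - 1)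
  rw [← hs] at h1 h2
  have hΦdeg : ∀ i j, (Φ i j).totalDegree ≤ s + 2 := by
    intro i j
    have hle : (Φ i j).totalDegree ≤ matDeg Φ :=
      Finset.le_sup (f := fun pr : Fin d × Fin d => (Φ pr.1 pr.2).totalDegree)
        (Finset.mem_univ (i, j))
    omega
  have hΨdeg : ∀ i, (Ψ i).totalDegree ≤ s + 1 := by
    intro i
    have hle : (Ψ i).totalDegree ≤ vecDeg Ψ :=
      Finset.le_sup (f := fun i : Fin d => (Ψ i).totalDegree) (Finset.mem_univ i)
    omega
  -- the key representation, for each k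
  have hrep : ∀ k, RepM P n ((s:ℤ) - 1) (s:ℤ) (Lop Φ Ψ (P n k)) := by
    intro k
    have hGdeg : (Lop Φ Ψ (P n k)).totalDegree ≤ n + s := by
      have hd1 := degOK_Lop hΦdeg hΨdeg (le_of_eq (hW.deg n k))
      exact (hd1.mono (by push_cast; omega)).toNat
    obtain ⟨A₀, g, hA₀, hgdeg, hGrep⟩ := hW.repE n (n + s) (Lop Φ Ψ (P n k)) hGdeg
    obtain ⟨c, hgexp⟩ := hW.expand (N := n) hgdeg
    -- kill the coefficients of low degree
    have hkill : ∀ m, m < n → m + s + 1 ≤ n → ∀ b, c m b = 0 := by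
      intro m hmn hms
      refine hW.coeff_eq_zero (N := n) (m := m) (by omega) (fun j' => ?_)
      rw [← hgexp]
      have hgg : g = Lop Φ Ψ (P n k) - (∑ a, P (n+1) a * A₀ a) := by
        rw [hGrep]; ring
      have hterm1 : u (Lop Φ Ψ (P n k) * P m j') = 0 := by
        rw [show Lop Φ Ψ (P n k) * P m j' = P m j' * Lop Φ Ψ (P n k) by ring,
          Lop_symm hΦsym hPearson (P m j') (P n k)]
        have hLdeg := degOK_Lop hΦdeg hΨdeg (le_of_eq (hW.deg m j'))
        rcases hLdeg with h0 | h0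
        · rw [h0, mul_zero, map_zero]
        · refine hW.orth_low ?_ k
          push_cast at h0
          omega
      have hterm2 : u ((∑ a, P (n+1) a * A₀ a) * P m j') = 0 := by
        rw [Finset.sum_mul, map_sum]
        refine Finset.sum_eq_zero fun a _ => ?_
        rcases hA₀ a with h0 | h0
        · rw [h0, mul_zero, zero_mul, map_zero]
        · rw [show (P (n+1) a * A₀ a) * P m j' = P (n+1) a * (A₀ a * P m j') by ring]
          refine hW.orth_low ?_ a
          have hmul := totalDegree_mul (A₀ a) (P m j')
          rw [hW.deg m j'] at hmul
          push_cast at h0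
          omega
      rw [hgg, sub_mul, map_sub, hterm1, hterm2, sub_zero]
    -- assemble
    have hfin : Lop Φ Ψ (P n k) = (∑ a, P (n+1) a * A₀ a)
        + ((∑ m ∈ Finset.range n, ∑ b, c m b • P m b) + ∑ b, c n b • P n b) := by
      rw [hGrep, hgexp, Finset.sum_range_succ]
    rw [hfin]
    refine RepM.add ?_ (RepM.add ?_ ?_)
    · refine ⟨A₀, 0, ?_, fun _ => degOK.zero, by simp⟩
      intro a
      exact (hA₀ a).mono (by push_cast; omega)
    · refine RepM.sum _ _ fun m hm => RepM.sum _ _ fun b _ => ?_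
      have hmn : m < n := Finset.mem_range.mp hm
      by_cases hcase : m + s + 1 ≤ n
      · rw [hkill m hmn hcase b, zero_smul]
        exact RepM.zero
      · have hK := hW.repK hd n (n - m) m b (by omega)
        exact RepM.smul _ (hK.mono (by push_cast; omega) (by push_cast; omega))
    · exact RepM.sum _ _ fun b _ => RepM.smul _
        (RepM.self (by exact_mod_cast Int.natCast_nonneg s) b)
  choose A B hA hB heq using hrep
  refine ⟨Matrix.of (fun a k => A k a), Matrix.of (fun a k => B k a), ?_, ?_, ?_⟩
  · exact fun a k => hA k a
  · refine Finset.sup_le fun pr _ => ?_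
    exact degOK.toNat (hB pr.2 pr.1)
  · exact heq
end
end

section
/- Let u be a moment functional on real polynomials in d variables satisfying the matrix Pearson equation div(Φ u) = Ψ^t u, where Φ is a d×d polynomial matrix and Ψ is a d×1 polynomial matrix, let λ ∈ ℝ, and define v = u + λ δ_0, where ⟨δ_0, f⟩ = f(0). Fix i ∈ {1,…,d} and assume the i-th column Φe_i of Φ vanishes at the origin. Then v satisfies the matrix Pearson equation div((x_i Φ) v) = (Φe_i + x_i Ψ)^t v; that is, ⟨v, x_i Φ ∇f + (Φe_i + x_i Ψ) f⟩ = 0 for every polynomial f. -/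
open MvPolynomial Matrix Finset MeasureTheory

noncomputable section

/-- The Dirac delta at the origin, `⟨δ₀, f⟩ = f(0)`, as a moment functional. -/
def dirac0 (d : ℕ) : MomF d :=
  (MvPolynomial.aeval (fun _ : Fin d => (0 : ℝ))).toLinearMap

/-- **Pearson equation for a Dirac modification.**
If `u` satisfies `div(Φ u) = Ψᵗ u`, `λ ∈ ℝ`, `v = u + λ δ₀`, and the `i`-th
column of `Φ` vanishes at the origin, then `v` satisfies
`div((xᵢ Φ) v) = (Φeᵢ + xᵢ Ψ)ᵗ v`. -/
theorem dirac_modification_pearson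
    {d : ℕ} (u : MomF d)
    (Φ : Matrix (Fin d) (Fin d) (MPoly d)) (Ψ : Fin d → MPoly d)
    (hPearson : Pearson u Φ Ψ)
    (lam : ℝ) (i : Fin d)
    (hcol : ∀ j : Fin d, MvPolynomial.eval (fun _ => (0 : ℝ)) (Φ j i) = 0) :
    Pearson (u + lam • dirac0 d)
      (Matrix.of fun a b => MvPolynomial.X i * Φ a b)
      (fun a => Φ a i + MvPolynomial.X i * Ψ a) := by
  intro f a
  have key : (∑ j, (Matrix.of fun a b => MvPolynomial.X i * Φ a b) a j * pderiv j f)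
        + (Φ a i + MvPolynomial.X i * Ψ a) * f
      = ∑ j, Φ a j * pderiv j (MvPolynomial.X i * f) + Ψ a * (MvPolynomial.X i * f) := by
    have h1 : ∀ j : Fin d, Φ a j * pderiv j (MvPolynomial.X i * f)
        = Φ a j * ((if i = j then 1 else 0) * f) + (MvPolynomial.X i * Φ a j) * pderiv j f := by
      intro j
      rw [pderiv_mul, pderiv_X, Pi.single_apply]
      ring
    have hsum : (∑ j, Φ a j * ((if i = j then 1 else 0) * f)) = Φ a i * f := by
      simp [mul_ite, ite_mul]
    simp only [h1, Finset.sum_add_distrib, hsum, Matrix.of_apply]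
    ring
  simp only [LinearMap.add_apply, LinearMap.smul_apply, smul_eq_mul]
  have hu : u ((∑ j, (Matrix.of fun a b => MvPolynomial.X i * Φ a b) a j * pderiv j f)
      + (Φ a i + MvPolynomial.X i * Ψ a) * f) = 0 := by
    rw [key]; exact hPearson (MvPolynomial.X i * f) a
  have hc : constantCoeff (Φ a i) = 0 := by
    have := hcol a
    rwa [show (fun _ : Fin d => (0:ℝ)) = (0 : Fin d → ℝ) from rfl, MvPolynomial.eval_zero] at this
  have hd : dirac0 d ((∑ j, (Matrix.of fun a b => MvPolynomial.X i * Φ a b) a j * pderiv j f)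
      + (Φ a i + MvPolynomial.X i * Ψ a) * f) = 0 := by
    simp [dirac0, hc, _root_.map_mul]
  rw [hu, hd, mul_zero, add_zero]
end
end

section
/- Let u be a semiclassical moment functional on real polynomials in d variables, with data Φ symmetric d×d of degree p, Ψ of size d×1 with degree q ≥ 1, s = max{p−2, q−1}, let L be the associated second-order operator, and let {ℙ_n}_{n≥0} be a WOPS with respect to u with H_m = ⟨u, ℙ_m ℙ_m^t⟩. Then for all m, n ≥ 0, the expansion coefficient Λ_m^n of L[ℙ_n^t] in the basis {ℙ_i}, defined by H_m Λ_m^n = ⟨u, ℙ_m L[ℙ_n^t]⟩, satisfies H_m Λ_m^n = −⟨u, (∇ℙ_m^t)^t Φ ∇ℙ_n^t⟩. -/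
open MvPolynomial Matrix Finset MeasureTheory

noncomputable section

lemma key_identity {d : ℕ} (u : MomF d) (Φ : Matrix (Fin d) (Fin d) (MPoly d))
    (hΦsym : Φ.IsSymm) (Ψ : Fin d → MPoly d) (hPearson : Pearson u Φ Ψ)
    (g f : MPoly d) :
    u (g * Lop Φ Ψ f) = - u (∑ i, ∑ j, pderiv i g * Φ i j * pderiv j f) := by
  have h0 : ∀ i : Fin d,
      u (∑ j, Φ i j * pderiv j (g * pderiv i f) + Ψ i * (g * pderiv i f)) = 0 :=
    fun i => hPearson (g * pderiv i f) i
  have hsum : u (∑ i, (∑ j, Φ i j * pderiv j (g * pderiv i f) + Ψ i * (g * pderiv i f))) = 0 := by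
    rw [map_sum]
    exact Finset.sum_eq_zero fun i _ => h0 i
  have e1 : ∀ i, ∑ j, Φ i j * pderiv j (g * pderiv i f)
      = (∑ j, Φ i j * (pderiv j g * pderiv i f))
        + ∑ j, g * (Φ i j * pderiv i (pderiv j f)) := by
    intro i
    rw [← Finset.sum_add_distrib]
    refine Finset.sum_congr rfl fun j _ => ?_
    rw [pderiv_mul, pderiv_comm']
    ring
  have hpoly : (∑ i, (∑ j, Φ i j * pderiv j (g * pderiv i f) + Ψ i * (g * pderiv i f)))
      = g * Lop Φ Ψ f + ∑ i, ∑ j, pderiv i g * Φ i j * pderiv j f := by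
    have hswap : (∑ i, ∑ j, Φ i j * (pderiv j g * pderiv i f))
        = ∑ i, ∑ j, pderiv i g * Φ i j * pderiv j f := by
      rw [Finset.sum_comm]
      refine Finset.sum_congr rfl fun j _ => Finset.sum_congr rfl fun i _ => ?_
      rw [hΦsym.apply i j]; ring
    have step : ∀ i : Fin d, (∑ j, Φ i j * pderiv j (g * pderiv i f) + Ψ i * (g * pderiv i f))
        = (∑ j, Φ i j * (pderiv j g * pderiv i f))
          + ((∑ j, g * (Φ i j * pderiv i (pderiv j f))) + g * (Ψ i * pderiv i f)) := by
      intro i; rw [e1 i]; ring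
    simp only [step, Finset.sum_add_distrib]
    rw [hswap]
    simp only [Lop, mul_add, Finset.mul_sum]
    abel
  rw [hpoly, map_add] at hsum
  linarith

/-- **Fourier coefficients of `L[ℙ_nᵗ]`.**
If `u` is semiclassical with data `Φ` (symmetric, degree `p`), `Ψ`
(degree `q ≥ 1`), `s = max{p−2, q−1}`, and `{ℙ_n}` is a WOPS for `u`, then for
all `m, n ≥ 0` the expansion coefficient `Λ_mⁿ` of `L[ℙ_nᵗ]`, defined by
`H_m Λ_mⁿ = ⟨u, ℙ_m L[ℙ_nᵗ]⟩`, satisfies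
`H_m Λ_mⁿ = −⟨u, (∇ℙ_mᵗ)ᵗ Φ ∇ℙ_nᵗ⟩`. -/
theorem expansion_coefficients_identity
    {d : ℕ} (u : MomF d) (P : (n : ℕ) → Fin (rdim d n) → MPoly d)
    (hW : IsWOPS u P)
    (Φ : Matrix (Fin d) (Fin d) (MPoly d)) (hΦsym : Φ.IsSymm)
    (Ψ : Fin d → MPoly d)
    (p q : ℕ) (hp : matDeg Φ = p) (hq : vecDeg Ψ = q) (hq1 : 1 ≤ q)
    (hPearson : Pearson u Φ Ψ)
    (hdet : (mApply u Φ).det ≠ 0)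
    (s : ℕ) (hs : s = max (p - 2) (q - 1)) :
    ∀ (m n : ℕ) (Λ : Matrix (Fin (rdim d m)) (Fin (rdim d n)) ℝ),
      Hmat u P m * Λ = mApply u (Matrix.of fun a k => P m a * Lop Φ Ψ (P n k)) →
      Hmat u P m * Λ = -mApply u ((gradT (P m))ᵀ * Φ * gradT (P n)) := by
  intro m n Λ h
  rw [h]
  ext a k
  simp only [mApply, Matrix.neg_apply, Matrix.of_apply, Matrix.mul_apply, Matrix.transpose_apply, gradT]
  rw [key_identity u Φ hΦsym Ψ hPearson (P m a) (P n k)]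
  congr 2
  simp only [Matrix.mul_apply, Matrix.transpose_apply, gradT, Matrix.of_apply,
    Finset.sum_mul]
  rw [Finset.sum_comm]
end
end
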